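/- arXiv:2205.05274 — 12 statements merged into one kernel-verified Lean document; each statement's English description precedes it below -/
import Mathlib

section
/- Let G be a connected finite simple graph with connected domination number γ_c(G) ≥ 2, and let H be any finite simple graph (not necessarily connected) with at least 2 vertices. Then the connected power domination number of the lexicographic product satisfies γ_{P,c}(G ∘ H) = γ_c(G). -/
open SimpleGraph

variable {V : Type*} {α β : Type*}

/-- The monitored set `M(S)`: least set containing the closed neighborhood of `S`
and closed under the propagation rule (a monitored vertex all of whose neighbors,
except possibly one, are monitored forces that remaining neighbor). -/
inductive Monitored (G : SimpleGraph V) (S : Set V) : V → Prop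
  | mem : ∀ {v}, v ∈ S → Monitored G S v
  | dom : ∀ {v w}, v ∈ S → G.Adj v w → Monitored G S w
  | prop : ∀ {v w}, Monitored G S v → G.Adj v w →
      (∀ u, G.Adj v u → u ≠ w → Monitored G S u) → Monitored G S w

/-- `S` is a power dominating set of `G`. -/
def IsPDS (G : SimpleGraph V) (S : Set V) : Prop := ∀ v, Monitored G S v

/-- `S` is a connected power dominating set of `G`. -/
def IsCPDS (G : SimpleGraph V) (S : Set V) : Prop :=
  IsPDS G S ∧ (G.induce S).Connected

/-- The connected power domination number `γ_{P,c}(G)`. -/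
noncomputable def cpdn (G : SimpleGraph V) : ℕ :=
  sInf {n | ∃ S : Finset V, S.card = n ∧ IsCPDS G (S : Set V)}

/-- Zero-forcing: least set containing `Z` closed under the color-change rule. -/
inductive Forced (G : SimpleGraph V) (Z : Set V) : V → Prop
  | mem : ∀ {v}, v ∈ Z → Forced G Z v
  | force : ∀ {v w}, Forced G Z v → G.Adj v w →
      (∀ u, G.Adj v u → u ≠ w → Forced G Z u) → Forced G Z w

/-- `Z` is a zero forcing set of `G`. -/
def IsZFS (G : SimpleGraph V) (Z : Set V) : Prop := ∀ v, Forced G Z v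

/-- `Z` is a connected zero forcing set of `G`. -/
def IsCZFS (G : SimpleGraph V) (Z : Set V) : Prop :=
  IsZFS G Z ∧ (G.induce Z).Connected

/-- The connected zero forcing number `Z_c(G)`. -/
noncomputable def czfn (G : SimpleGraph V) : ℕ :=
  sInf {n | ∃ Z : Finset V, Z.card = n ∧ IsCZFS G (Z : Set V)}

/-- `S` is a dominating set of `G`: `N[S] = V(G)`. -/
def IsDomSet (G : SimpleGraph V) (S : Set V) : Prop :=
  ∀ v, ∃ u ∈ S, u = v ∨ G.Adj u v

/-- `S` is a connected dominating set of `G`. -/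
def IsCDS (G : SimpleGraph V) (S : Set V) : Prop :=
  IsDomSet G S ∧ (G.induce S).Connected

/-- The domination number `γ(G)`. -/
noncomputable def domNum (G : SimpleGraph V) : ℕ :=
  sInf {n | ∃ S : Finset V, S.card = n ∧ IsDomSet G (S : Set V)}

/-- The connected domination number `γ_c(G)`. -/
noncomputable def cdomNum (G : SimpleGraph V) : ℕ :=
  sInf {n | ∃ S : Finset V, S.card = n ∧ IsCDS G (S : Set V)}

/-- The lexicographic product `G ∘ H`. -/
def lexProd (G : SimpleGraph α) (H : SimpleGraph β) : SimpleGraph (α × β) where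
  Adj x y := G.Adj x.1 y.1 ∨ (x.1 = y.1 ∧ H.Adj x.2 y.2)
  symm := ⟨by
    rintro ⟨a, b⟩ ⟨c, d⟩ (h | ⟨h1, h2⟩)
    · exact Or.inl h.symm
    · exact Or.inr ⟨h1.symm, h2.symm⟩⟩
  loopless := ⟨by
    rintro ⟨a, b⟩ (h | ⟨-, h⟩)
    · exact G.loopless.irrefl a h
    · exact H.loopless.irrefl b h⟩

/-- The tensor (direct) product `G × H`. -/
def tensorProd (G : SimpleGraph α) (H : SimpleGraph β) : SimpleGraph (α × β) where
  Adj x y := G.Adj x.1 y.1 ∧ H.Adj x.2 y.2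
  symm := ⟨fun _ _ ⟨h1, h2⟩ => ⟨h1.symm, h2.symm⟩⟩
  loopless := ⟨fun x ⟨h1, _⟩ => G.loopless.irrefl x.1 h1⟩

/-- A vertex `v` is universal in `G`. -/
def IsUniversal (G : SimpleGraph V) (v : V) : Prop := ∀ w, w ≠ v → G.Adj v w

/-- The join of a single vertex (`none`) with the graph `G` (on `some` vertices). -/
def coneGraph (G : SimpleGraph α) : SimpleGraph (Option α) where
  Adj x y := match x, y with
    | none, none => False
    | none, some _ => True
    | some _, none => True
    | some a, some b => G.Adj a b
  symm := ⟨by rintro (_ | a) (_ | b) h <;> first | trivial | exact h.symm⟩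
  loopless := ⟨by rintro (_ | a) h <;> first | trivial | exact G.loopless.irrefl a h⟩

/-- The wheel `W_n`: the join of a single vertex with the cycle `C_n`. -/
def wheelGraph (n : ℕ) : SimpleGraph (Option (Fin n)) := coneGraph (cycleGraph n)

/-- The fan `F_n`: the join of a single vertex with the path `P_n`. -/
def fanGraph (n : ℕ) : SimpleGraph (Option (Fin n)) := coneGraph (pathGraph n)

-- fiber lemma
lemma monitored_fst_ne {G : SimpleGraph α} {H : SimpleGraph β} [Fintype β]
    (hβ : 2 ≤ Fintype.card β) {T : Set (α × β)} {v : α}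
    (hv : ∀ u ∈ Prod.fst '' T, ¬(u = v ∨ G.Adj u v)) :
    ∀ x, Monitored (lexProd G H) T x → x.1 ≠ v := by
  intro x hx
  induction hx with
  | @mem y hy =>
    intro h; exact hv y.1 ⟨y, hy, rfl⟩ (Or.inl h)
  | @dom y w hy hadj =>
    intro h
    rcases hadj with hg | ⟨he, -⟩
    · exact hv y.1 ⟨y, hy, rfl⟩ (Or.inr (h ▸ hg))
    · exact hv y.1 ⟨y, hy, rfl⟩ (Or.inl (he.trans h))
  | @prop y w hy hadj hall ih ihall =>
    intro h
    rcases hadj with hg | ⟨he, -⟩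
    · obtain ⟨b', hb'⟩ := Fintype.exists_ne_of_one_lt_card (by omega) w.2
      have hadj' : (lexProd G H).Adj y (v, b') := Or.inl (h ▸ hg)
      have hne : (v, b') ≠ w := by
        intro hh; apply hb'; rw [← hh]
      exact ihall (v, b') hadj' hne rfl
    · exact ih (he.trans h)

lemma reach_proj {G : SimpleGraph α} {H : SimpleGraph β} {T : Set (α × β)}
    {p q : ↥T} (w : ((lexProd G H).induce T).Walk p q) :
    (G.induce (Prod.fst '' T)).Reachable ⟨p.1.1, ⟨p.1, p.2, rfl⟩⟩ ⟨q.1.1, ⟨q.1, q.2, rfl⟩⟩ := by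
  induction w with
  | nil => exact Reachable.refl _
  | @cons u x y h w ih =>
    have h' : G.Adj u.1.1 x.1.1 ∨ (u.1.1 = x.1.1 ∧ H.Adj u.1.2 x.1.2) := h
    rcases h' with hg | ⟨he, -⟩
    · have ha : (G.induce (Prod.fst '' T)).Adj ⟨u.1.1, ⟨u.1, u.2, rfl⟩⟩ ⟨x.1.1, ⟨x.1, x.2, rfl⟩⟩ := hg
      exact ha.reachable.trans ih
    · have : (⟨u.1.1, ⟨u.1, u.2, rfl⟩⟩ : ↥(Prod.fst '' T)) = ⟨x.1.1, ⟨x.1, x.2, rfl⟩⟩ :=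
        Subtype.ext he
      rw [this]; exact ih

-- every vertex has a neighbor in a CDS of size ≥ 2
lemma cds_dominating_adj {G : SimpleGraph α} {S : Finset α}
    (hS : IsCDS G (S : Set α)) (hS2 : 2 ≤ S.card) (a : α) :
    ∃ s ∈ S, G.Adj s a := by
  by_cases ha : a ∈ S
  · obtain ⟨b, hb, hba⟩ := Finset.exists_mem_ne hS2 a
    have hne : (⟨a, ha⟩ : ↥(S : Set α)) ≠ ⟨b, hb⟩ := fun h => hba (congrArg Subtype.val h).symm
    obtain ⟨w⟩ := hS.2.preconnected ⟨a, ha⟩ ⟨b, hb⟩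
    cases w with
    | nil => exact (hne rfl).elim
    | cons h w =>
      rename_i x
      exact ⟨x.1, x.2, (h : G.Adj a x.1).symm⟩
  · obtain ⟨u, hu, hh⟩ := hS.1 a
    rcases hh with rfl | hadj
    · exact absurd hu ha
    · exact ⟨u, hu, hadj⟩

/-- If `γ_c(G) ≥ 2` then `γ_{P,c}(G ∘ H) = γ_c(G)`. -/
theorem stmt_0 {α β : Type*} [Fintype α] [Fintype β]
    (G : SimpleGraph α) (H : SimpleGraph β)
    (hG : G.Connected) (hHcard : 2 ≤ Fintype.card β)
    (hγc : 2 ≤ cdomNum G) :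
    cpdn (lexProd G H) = cdomNum G := by
  classical
  have hαne : Nonempty α := hG.nonempty
  have hβne : Nonempty β := Fintype.card_pos_iff.mp (by omega)
  obtain ⟨b₀⟩ := hβne
  -- the cdom set is nonempty
  have hcdsUniv : IsCDS G ((Finset.univ : Finset α) : Set α) := by
    constructor
    · intro v; exact ⟨v, by simp, Or.inl rfl⟩
    · rw [Finset.coe_univ]; exact (induceUnivIso G).connected_iff.mpr hG
  have hne : {n | ∃ S : Finset α, S.card = n ∧ IsCDS G (S : Set α)}.Nonempty :=
    ⟨(Finset.univ : Finset α).card, Finset.univ, rfl, hcdsUniv⟩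
  -- obtain a minimum connected dominating set S
  obtain ⟨S, hScard, hSCDS⟩ := Nat.sInf_mem hne
  have hS2 : 2 ≤ S.card := hScard ▸ hγc
  -- Z = S × {b₀} is a CPDS of lexProd G H
  set Z : Finset (α × β) := S.image (fun s => (s, b₀)) with hZdef
  have hZcoe : (Z : Set (α × β)) = (fun s => (s, b₀)) '' (S : Set α) := by
    simp [hZdef]
  have hZcard : Z.card = S.card :=
    Finset.card_image_of_injective _ (fun a b h => (Prod.mk.injEq _ _ _ _ ▸ h).1)
  have hZCPDS : IsCPDS (lexProd G H) (Z : Set (α × β)) := by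
    constructor
    · intro x
      obtain ⟨s, hs, hadj⟩ := cds_dominating_adj hSCDS hS2 x.1
      have hmem : (s, b₀) ∈ (Z : Set (α × β)) := by
        rw [hZcoe]; exact ⟨s, hs, rfl⟩
      exact Monitored.dom hmem (Or.inl hadj)
    · -- connected
      let f : G.induce (S : Set α) →g (lexProd G H).induce (Z : Set (α × β)) :=
        ⟨fun s => ⟨(s.1, b₀), Finset.mem_coe.mpr (Finset.mem_image.mpr
            ⟨s.1, Finset.mem_coe.mp s.2, rfl⟩)⟩, fun hab => Or.inl hab⟩
      rw [connected_iff]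
      obtain ⟨s₀, hs₀⟩ := Finset.card_pos.mp (show 0 < S.card by omega)
      refine ⟨?_, ⟨⟨(s₀, b₀), by rw [hZcoe]; exact ⟨s₀, hs₀, rfl⟩⟩⟩⟩
      intro x y
      obtain ⟨sx, hsx, hx⟩ : ∃ s, ∃ hs : (s : α) ∈ (S : Set α), x = f ⟨s, hs⟩ := by
        obtain ⟨s, hs, hsx⟩ := Finset.mem_image.mp (Finset.mem_coe.mp x.2)
        exact ⟨s, hs, Subtype.ext hsx.symm⟩
      obtain ⟨sy, hsy, hy⟩ : ∃ s, ∃ hs : (s : α) ∈ (S : Set α), y = f ⟨s, hs⟩ := by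
        obtain ⟨s, hs, hsy⟩ := Finset.mem_image.mp (Finset.mem_coe.mp y.2)
        exact ⟨s, hs, Subtype.ext hsy.symm⟩
      rw [hx, hy]
      exact Reachable.map f (hSCDS.2.preconnected ⟨sx, hsx⟩ ⟨sy, hsy⟩)
  -- upper bound
  have hub : cpdn (lexProd G H) ≤ cdomNum G := by
    apply Nat.sInf_le
    exact ⟨Z, by rw [hZcard, hScard]; rfl, hZCPDS⟩
  -- lower bound
  have hlb : cdomNum G ≤ cpdn (lexProd G H) := by
    have hne' : {n | ∃ T : Finset (α × β), T.card = n ∧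
        IsCPDS (lexProd G H) (T : Set (α × β))}.Nonempty := ⟨Z.card, Z, rfl, hZCPDS⟩
    obtain ⟨T, hTcard, hTPDS, hTconn⟩ := Nat.sInf_mem hne'
    set D : Finset α := T.image Prod.fst with hDdef
    have hDcoe : (D : Set α) = Prod.fst '' (T : Set (α × β)) := by simp [hDdef]
    have hDdom : IsDomSet G (D : Set α) := by
      intro v
      by_contra hcon
      push_neg at hcon
      have hv : ∀ u ∈ Prod.fst '' (T : Set (α × β)), ¬(u = v ∨ G.Adj u v) := by
        intro u hu
        rw [← hDcoe] at hu
        rintro (h | h)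
        · exact (hcon u hu).1 h
        · exact (hcon u hu).2 h
      exact monitored_fst_ne hHcard hv (v, b₀) (hTPDS (v, b₀)) rfl
    have hDconn : (G.induce (D : Set α)).Connected := by
      rw [hDcoe, connected_iff]
      obtain ⟨t⟩ := hTconn.nonempty
      refine ⟨?_, ⟨⟨t.1.1, t.1, t.2, rfl⟩⟩⟩
      rintro ⟨x, px, hpx, rfl⟩ ⟨y, py, hpy, rfl⟩
      obtain ⟨w⟩ := hTconn.preconnected ⟨px, hpx⟩ ⟨py, hpy⟩
      exact reach_proj w
    calc cdomNum G ≤ D.card := Nat.sInf_le ⟨D, rfl, hDdom, hDconn⟩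
      _ ≤ T.card := Finset.card_image_le
      _ = cpdn (lexProd G H) := by rw [hTcard]; rfl
  omega
end

section
/- Let G be a finite simple graph with at least 2 vertices having a universal vertex (i.e. γ(G) = 1), and let H be a finite simple graph (not necessarily connected) such that either H has a universal vertex (γ(H) = 1) or H is the empty graph on two vertices. Then γ_{P,c}(G ∘ H) = 1. -/
open SimpleGraph

variable {V : Type*} {α β : Type*}

lemma singleton_connected (G : SimpleGraph V) (x : V) :
    (G.induce ({x} : Set V)).Connected := by
  rw [connected_iff_exists_forall_reachable]
  refine ⟨⟨x, rfl⟩, fun w => ?_⟩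
  have : (⟨x, rfl⟩ : ({x} : Set V)) = w := Subtype.ext w.2.symm
  exact this ▸ Reachable.refl _

lemma singleton_cpds {α β : Type*} [Fintype α] [Fintype β]
    (G : SimpleGraph α) (H : SimpleGraph β)
    (hGcard : 2 ≤ Fintype.card α)
    (hGuniv : ∃ v, _root_.IsUniversal G v)
    (hH : (∃ v, _root_.IsUniversal H v) ∨ (Fintype.card β = 2 ∧ H = ⊥)) :
    ∃ x : α × β, IsCPDS (lexProd G H) {x} := by
  obtain ⟨g, hg⟩ := hGuniv
  rcases hH with ⟨h, hh⟩ | ⟨hcard, hbot⟩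
  · refine ⟨(g, h), ?_, singleton_connected _ _⟩
    rintro ⟨a, b⟩
    by_cases ha : a = g
    · subst ha
      by_cases hb : b = h
      · subst hb; exact Monitored.mem rfl
      · exact Monitored.dom rfl (Or.inr ⟨rfl, hh b hb⟩)
    · exact Monitored.dom rfl (Or.inl (hg a ha))
  · subst hbot
    rw [← Nat.card_eq_fintype_card, Nat.card_eq_two_iff] at hcard
    obtain ⟨x0, y0, hxy, huniv2⟩ := hcard
    have hclass : ∀ z : β, z = x0 ∨ z = y0 := by
      intro z
      have : z ∈ ({x0, y0} : Set β) := huniv2 ▸ Set.mem_univ z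
      simpa using this
    obtain ⟨a0, ha0⟩ := Fintype.exists_ne_of_one_lt_card hGcard g
    refine ⟨(g, x0), ?_, singleton_connected _ _⟩
    have hm : ∀ p : α × β, p.1 ≠ g → Monitored (lexProd G ⊥) {(g, x0)} p := by
      intro p hp
      exact Monitored.dom rfl (Or.inl (hg p.1 hp))
    rintro ⟨a, b⟩
    by_cases ha : a = g
    · subst ha
      rcases hclass b with rfl | rfl
      · exact Monitored.mem rfl
      · -- propagate from (a0, x0)
        refine Monitored.prop (v := (a0, x0)) (hm _ ha0) (Or.inl (hg a0 ha0).symm) ?_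
        rintro ⟨p, q⟩ hadj hne
        rcases hadj with hap | ⟨hp, hq⟩
        · by_cases hpg : p = a
          · subst hpg
            rcases hclass q with rfl | rfl
            · exact Monitored.mem rfl
            · exact absurd rfl hne
          · exact hm _ hpg
        · exact absurd hq (by simp)
    · exact hm _ ha

/-- If `γ(G) = 1` and either `γ(H) = 1` or `H ≅ K̄₂`, then `γ_{P,c}(G ∘ H) = 1`. -/
theorem stmt_1 {α β : Type*} [Fintype α] [Fintype β]
    (G : SimpleGraph α) (H : SimpleGraph β)
    (hGcard : 2 ≤ Fintype.card α)
    (hGuniv : ∃ v, _root_.IsUniversal G v)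
    (hH : (∃ v, _root_.IsUniversal H v) ∨ (Fintype.card β = 2 ∧ H = ⊥)) :
    cpdn (lexProd G H) = 1 := by
  obtain ⟨x, hx⟩ := singleton_cpds G H hGcard hGuniv hH
  have h1 : 1 ∈ {n | ∃ S : Finset (α × β), S.card = n ∧ IsCPDS (lexProd G H) (S : Set (α × β))} :=
    ⟨{x}, Finset.card_singleton x, by simpa using hx⟩
  have hle : cpdn (lexProd G H) ≤ 1 := Nat.sInf_le h1
  have hne : cpdn (lexProd G H) ≠ 0 := by
    intro h0
    rcases Nat.sInf_eq_zero.mp h0 with h0' | h0'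
    · obtain ⟨S, hS0, hS⟩ := h0'
      rw [Finset.card_eq_zero] at hS0
      subst hS0
      obtain ⟨⟨v, hv⟩⟩ := hS.2.nonempty
      simp at hv
    · exact absurd (h0' ▸ h1) (Set.notMem_empty 1)
  omega
end

section
/- Let G and H be connected finite simple graphs, each with at least 2 vertices. Then γ_{P,c}(G □ H) ≤ min{γ_{P,c}(G)·|V(H)|, γ_{P,c}(H)·|V(G)|}. -/
open SimpleGraph

variable {V : Type*} {α β : Type*}

lemma monitored_boxProd_left (G : SimpleGraph α) (H : SimpleGraph β)
    (S : Set α) {v : α} (hv : Monitored G S v) (b : β) :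
    Monitored (G □ H) (S ×ˢ (Set.univ : Set β)) (v, b) := by
  induction hv generalizing b with
  | mem h => exact .mem ⟨h, trivial⟩
  | @dom v w h hadj => exact Monitored.dom (v := (v, b)) (w := (w, b)) ⟨h, trivial⟩ (Or.inl ⟨hadj, rfl⟩)
  | @prop v w hmon hadj hall ihmon ihall =>
    refine .prop (ihmon b) (Or.inl ⟨hadj, rfl⟩) ?_
    rintro ⟨u1, u2⟩ (⟨hg, he⟩ | ⟨hh, he⟩) hne
    · cases he
      by_cases hw : u1 = w
      · exact absurd (by rw [hw]) hne
      · exact ihall u1 hg hw _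
    · cases he
      exact ihmon u2

lemma monitored_boxProd_right (G : SimpleGraph α) (H : SimpleGraph β)
    (S : Set β) {v : β} (hv : Monitored H S v) (a : α) :
    Monitored (G □ H) ((Set.univ : Set α) ×ˢ S) (a, v) := by
  induction hv generalizing a with
  | mem h => exact .mem ⟨trivial, h⟩
  | @dom v w h hadj => exact Monitored.dom (v := (a, v)) (w := (a, w)) ⟨trivial, h⟩ (Or.inr ⟨hadj, rfl⟩)
  | @prop v w hmon hadj hall ihmon ihall =>
    refine .prop (ihmon a) (Or.inr ⟨hadj, rfl⟩) ?_
    rintro ⟨u1, u2⟩ (⟨hg, he⟩ | ⟨hh, he⟩) hne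
    · cases he
      exact ihmon u1
    · cases he
      by_cases hw : u2 = w
      · exact absurd (by rw [hw]) hne
      · exact ihall u2 hh hw _

def induceLeftIso (G : SimpleGraph α) (H : SimpleGraph β) (T : Set α) :
    (G □ H).induce (T ×ˢ (Set.univ : Set β)) ≃g (G.induce T) □ H where
  toFun x := (⟨x.1.1, x.2.1⟩, x.1.2)
  invFun p := ⟨(p.1.1, p.2), ⟨p.1.2, trivial⟩⟩
  left_inv x := rfl
  right_inv p := rfl
  map_rel_iff' := by
    rintro ⟨⟨a, b⟩, ha⟩ ⟨⟨c, d⟩, hc⟩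
    simp [boxProd_adj, Subtype.ext_iff, comap_adj]

def induceRightIso (G : SimpleGraph α) (H : SimpleGraph β) (T : Set β) :
    (G □ H).induce ((Set.univ : Set α) ×ˢ T) ≃g G □ (H.induce T) where
  toFun x := (x.1.1, ⟨x.1.2, x.2.2⟩)
  invFun p := ⟨(p.1, p.2.1), ⟨trivial, p.2.2⟩⟩
  left_inv x := rfl
  right_inv p := rfl
  map_rel_iff' := by
    rintro ⟨⟨a, b⟩, ha⟩ ⟨⟨c, d⟩, hc⟩
    simp [boxProd_adj, Subtype.ext_iff, comap_adj]

lemma cpdn_le_left [Fintype α] [Fintype β] (G : SimpleGraph α) (H : SimpleGraph β)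
    (hH : H.Connected) (T : Finset α) (hT : IsCPDS G (T : Set α)) :
    cpdn (G □ H) ≤ T.card * Fintype.card β := by
  apply Nat.sInf_le
  refine ⟨T ×ˢ Finset.univ, by simp, ?_, ?_⟩
  · intro v
    have := monitored_boxProd_left G H (T : Set α) (hT.1 v.1) v.2
    rw [Finset.coe_product, Finset.coe_univ]
    exact this
  · rw [Finset.coe_product, Finset.coe_univ]
    exact (induceLeftIso G H (T : Set α)).connected_iff.mpr
      (connected_boxProd.mpr ⟨hT.2, hH⟩)

lemma cpdn_le_right [Fintype α] [Fintype β] (G : SimpleGraph α) (H : SimpleGraph β)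
    (hG : G.Connected) (T : Finset β) (hT : IsCPDS H (T : Set β)) :
    cpdn (G □ H) ≤ Fintype.card α * T.card := by
  apply Nat.sInf_le
  refine ⟨Finset.univ ×ˢ T, by simp, ?_, ?_⟩
  · intro v
    have := monitored_boxProd_right G H (T : Set β) (hT.1 v.2) v.1
    rw [Finset.coe_product, Finset.coe_univ]
    exact this
  · rw [Finset.coe_product, Finset.coe_univ]
    exact (induceRightIso G H (T : Set β)).connected_iff.mpr
      (connected_boxProd.mpr ⟨hG, hT.2⟩)

lemma cpdn_set_nonempty [Fintype V] (G : SimpleGraph V) (hG : G.Connected) :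
    {n | ∃ S : Finset V, S.card = n ∧ IsCPDS G (S : Set V)}.Nonempty := by
  refine ⟨Fintype.card V, Finset.univ, Finset.card_univ, fun v => .mem (by simp), ?_⟩
  rw [Finset.coe_univ]
  exact G.induceUnivIso.connected_iff.mpr hG


/-- `γ_{P,c}(G □ H) ≤ min{γ_{P,c}(G)·|V(H)|, γ_{P,c}(H)·|V(G)|}`. -/
theorem stmt_3 {α β : Type*} [Fintype α] [Fintype β]
    (G : SimpleGraph α) (H : SimpleGraph β)
    (hG : G.Connected) (hH : H.Connected)
    (hGcard : 2 ≤ Fintype.card α) (hHcard : 2 ≤ Fintype.card β) :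
    cpdn (G □ H) ≤ min (cpdn G * Fintype.card β) (cpdn H * Fintype.card α) := by
  refine le_min ?_ ?_
  · obtain ⟨S, hScard, hS⟩ := Nat.sInf_mem (cpdn_set_nonempty G hG)
    calc cpdn (G □ H) ≤ S.card * Fintype.card β := cpdn_le_left G H hH S hS
    _ = cpdn G * Fintype.card β := by unfold cpdn; rw [hScard]
  · obtain ⟨S, hScard, hS⟩ := Nat.sInf_mem (cpdn_set_nonempty H hH)
    calc cpdn (G □ H) ≤ Fintype.card α * S.card := cpdn_le_right G H hG S hS
    _ = cpdn H * Fintype.card α := by unfold cpdn; rw [hScard, Nat.mul_comm]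
end

section
/- Let G and H be connected finite simple graphs, each with at least 2 vertices. Then γ_{P,c}(G □ H) ≤ min{Z_c(G)·γ_c(H), Z_c(H)·γ_c(G)}. -/
open SimpleGraph

variable {V : Type*} {α β : Type*}

private lemma monitor1 {α β : Type*} {G : SimpleGraph α} {H : SimpleGraph β}
    {Z : Set α} {D : Set β}
    (hD : IsDomSet H D) {v : α} (hv : Forced G Z v) :
    ∀ b, Monitored (G □ H) (Z ×ˢ D) (v, b) := by
  induction hv with
  | mem h =>
    intro b
    obtain ⟨u, hu, huv⟩ := hD b
    rcases huv with rfl | hadj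
    · exact Monitored.mem ⟨h, hu⟩
    · exact Monitored.dom (v := (‹_›, u)) ⟨h, hu⟩ (Or.inr ⟨hadj, rfl⟩)
  | @force v w hvF hadj hnb ih1 ih2 =>
    intro b
    refine Monitored.prop (ih1 b) (Or.inl ⟨hadj, rfl⟩) ?_
    rintro ⟨c, d⟩ hx hne
    rcases hx with ⟨hgc, hbd⟩ | ⟨hhd, hvc⟩
    · dsimp at hgc hbd; subst hbd
      rcases eq_or_ne c w with rfl | hcw
      · exact absurd rfl hne
      · exact ih2 c hgc hcw b
    · dsimp at hhd hvc; subst hvc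
      exact ih1 d

private lemma monitor2 {α β : Type*} {G : SimpleGraph α} {H : SimpleGraph β}
    {Z : Set β} {D : Set α}
    (hD : IsDomSet G D) {v : β} (hv : Forced H Z v) :
    ∀ a, Monitored (G □ H) (D ×ˢ Z) (a, v) := by
  induction hv with
  | mem h =>
    intro a
    obtain ⟨u, hu, huv⟩ := hD a
    rcases huv with rfl | hadj
    · exact Monitored.mem ⟨hu, h⟩
    · exact Monitored.dom (v := (u, ‹_›)) ⟨hu, h⟩ (Or.inl ⟨hadj, rfl⟩)
  | @force v w hvF hadj hnb ih1 ih2 =>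
    intro a
    refine Monitored.prop (ih1 a) (Or.inr ⟨hadj, rfl⟩) ?_
    rintro ⟨c, d⟩ hx hne
    rcases hx with ⟨hgc, hbd⟩ | ⟨hhd, hvc⟩
    · dsimp at hgc hbd; subst hbd
      exact ih1 c
    · dsimp at hhd hvc; subst hvc
      rcases eq_or_ne d w with rfl | hdw
      · exact absurd rfl hne
      · exact ih2 d hhd hdw a

private def prodInduceIso {α β : Type*} (G : SimpleGraph α) (H : SimpleGraph β)
    (s : Set α) (t : Set β) :
    ((G □ H).induce (s ×ˢ t)) ≃g ((G.induce s) □ (H.induce t)) where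
  toEquiv := Equiv.Set.prod s t
  map_rel_iff' := by
    rintro ⟨⟨a, b⟩, ha, hb⟩ ⟨⟨c, d⟩, hc, hd⟩
    show G.Adj a c ∧ (⟨b, hb⟩ : t) = ⟨d, hd⟩ ∨ H.Adj b d ∧ (⟨a, ha⟩ : s) = ⟨c, hc⟩ ↔
      G.Adj a c ∧ b = d ∨ H.Adj b d ∧ a = c
    simp [Subtype.ext_iff]

private lemma czfn_witness {α : Type*} [Fintype α] (G : SimpleGraph α) (hG : G.Connected) :
    ∃ Z : Finset α, Z.card = czfn G ∧ IsCZFS G (Z : Set α) := by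
  have hne : {n | ∃ Z : Finset α, Z.card = n ∧ IsCZFS G (Z : Set α)}.Nonempty := by
    refine ⟨Fintype.card α, Finset.univ, Finset.card_univ, fun v => Forced.mem (by simp), ?_⟩
    rw [Finset.coe_univ]
    exact (induceUnivIso G).connected_iff.mpr hG
  obtain ⟨Z, hc, hZ⟩ := Nat.sInf_mem hne
  exact ⟨Z, hc, hZ⟩

private lemma cdom_witness {α : Type*} [Fintype α] (G : SimpleGraph α) (hG : G.Connected) :
    ∃ D : Finset α, D.card = cdomNum G ∧ IsCDS G (D : Set α) := by
  have hne : {n | ∃ D : Finset α, D.card = n ∧ IsCDS G (D : Set α)}.Nonempty := by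
    refine ⟨Fintype.card α, Finset.univ, Finset.card_univ, fun v => ⟨v, by simp⟩, ?_⟩
    rw [Finset.coe_univ]
    exact (induceUnivIso G).connected_iff.mpr hG
  obtain ⟨D, hc, hD⟩ := Nat.sInf_mem hne
  exact ⟨D, hc, hD⟩

/-- `γ_{P,c}(G □ H) ≤ min{Z_c(G)·γ_c(H), Z_c(H)·γ_c(G)}`. -/
theorem stmt_4 {α β : Type*} [Fintype α] [Fintype β]
    (G : SimpleGraph α) (H : SimpleGraph β)
    (hG : G.Connected) (hH : H.Connected)
    (hGcard : 2 ≤ Fintype.card α) (hHcard : 2 ≤ Fintype.card β) :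
    cpdn (G □ H) ≤ min (czfn G * cdomNum H) (czfn H * cdomNum G) := by
  obtain ⟨Z, hZc, hZ⟩ := czfn_witness G hG
  obtain ⟨D, hDc, hD⟩ := cdom_witness H hH
  obtain ⟨Z', hZ'c, hZ'⟩ := czfn_witness H hH
  obtain ⟨D', hD'c, hD'⟩ := cdom_witness G hG
  refine le_min (Nat.sInf_le ⟨Z ×ˢ D, ?_, ?_, ?_⟩) (Nat.sInf_le ⟨D' ×ˢ Z', ?_, ?_, ?_⟩)
  · rw [Finset.card_product, hZc, hDc]
  · intro x
    rw [Finset.coe_product]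
    exact monitor1 hD.1 (hZ.1 x.1) x.2
  · rw [Finset.coe_product]
    exact (prodInduceIso G H (Z : Set α) (D : Set β)).connected_iff.mpr (hZ.2.boxProd hD.2)
  · rw [Finset.card_product, hD'c, hZ'c, Nat.mul_comm]
  · intro x
    rw [Finset.coe_product]
    exact monitor2 hD'.1 (hZ'.1 x.2) x.1
  · rw [Finset.coe_product]
    exact (prodInduceIso G H (D' : Set α) (Z' : Set β)).connected_iff.mpr (hD'.2.boxProd hZ'.2)
end

section
/- Let G be a connected finite simple graph with at least 2 vertices and let P_n be the path on n ≥ 2 vertices. Then γ_{P,c}(G □ P_n) ≤ γ_c(G). -/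
open SimpleGraph

variable {V : Type*} {α β : Type*}

/-- `γ_{P,c}(G □ P_n) ≤ γ_c(G)`. -/
theorem stmt_5 {α : Type*} [Fintype α]
    (G : SimpleGraph α) (hG : G.Connected)
    (hGcard : 2 ≤ Fintype.card α)
    (n : ℕ) (hn : 2 ≤ n) :
    cpdn (G □ pathGraph n) ≤ cdomNum G := by
  classical
  have hne : {m | ∃ S : Finset α, S.card = m ∧ IsCDS G (S : Set α)}.Nonempty := by
    refine ⟨Fintype.card α, Finset.univ, Finset.card_univ, ?_, ?_⟩
    · intro v; exact ⟨v, Finset.mem_coe.mpr (Finset.mem_univ v), Or.inl rfl⟩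
    · have : (Finset.univ : Finset α) = (Set.univ : Set α) := by simp
      rw [this]
      exact (Iso.connected_iff (induceUnivIso G)).mpr hG
  obtain ⟨S, hcard, hdom, hconn⟩ := Nat.sInf_mem hne
  rw [← cdomNum] at hcard
  have hn0 : 0 < n := by omega
  set z : Fin n := ⟨0, hn0⟩ with hz
  set T : Finset (α × Fin n) := S ×ˢ {z} with hT
  have hTmem : ∀ p : α × Fin n, p ∈ (T : Set (α × Fin n)) ↔ p.1 ∈ S ∧ p.2 = z := by
    intro p
    simp only [hT, Finset.coe_product, Finset.coe_singleton, Set.mem_prod,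
      Set.mem_singleton_iff, Finset.mem_coe]
  have hTcard : T.card = S.card := by simp [hT]
  refine le_trans (Nat.sInf_le ⟨T, rfl, ?_, ?_⟩) (by rw [hTcard, hcard])
  · -- IsPDS
    have layer : ∀ k : ℕ, ∀ hk : k < n, ∀ v : α,
        Monitored (G □ pathGraph n) (T : Set (α × Fin n)) (v, ⟨k, hk⟩) := by
      intro k
      induction k using Nat.strong_induction_on with
      | _ k IH =>
        intro hk v
        match k with
        | 0 =>
          obtain ⟨u, hu, huv⟩ := hdom v
          rcases huv with rfl | hadj
          · exact Monitored.mem ((hTmem (u, ⟨0, hk⟩)).mpr ⟨hu, by simp [hz]⟩)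
          · exact Monitored.dom ((hTmem (u, z)).mpr ⟨hu, rfl⟩)
              (by rw [hz]; exact boxProd_adj_left.mpr hadj)
        | m + 1 =>
          have hm : m < n := by omega
          have hprev := IH m (by omega) hm v
          refine Monitored.prop hprev ?_ ?_
          · exact boxProd_adj_right.mpr (pathGraph_adj.mpr (Or.inl rfl))
          · rintro ⟨w, j⟩ hadj hne'
            rcases boxProd_adj.mp hadj with ⟨hGvw, hj⟩ | ⟨hpath, hvw⟩
            · cases hj
              exact IH m (by omega) hm w
            · rcases pathGraph_adj.mp hpath with h1 | h2
              · exfalso; apply hne'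
                have hj : j = (⟨m + 1, hk⟩ : Fin n) := by
                  apply Fin.ext; simpa using h1.symm
                rw [hj]
                exact congrArg (fun a => (a, (⟨m+1,hk⟩ : Fin n))) hvw.symm
              · have h2' : j.val + 1 = m := by simpa using h2
                have hmon := IH j.val (by omega) j.isLt w
                have heta : (⟨j.val, j.isLt⟩ : Fin n) = j := Fin.eta j j.isLt
                rw [heta] at hmon
                exact hmon
    intro p
    have := layer p.2.val p.2.isLt p.1
    simpa using this
  · -- Connected
    have e : ((G □ pathGraph n).induce (T : Set (α × Fin n))) ≃g (G.induce (S : Set α)) := by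
      refine ⟨⟨fun p => ⟨p.1.1, ((hTmem p.1).mp p.2).1⟩,
        fun v => ⟨(v.1, z), (hTmem (v.1, z)).mpr ⟨v.2, rfl⟩⟩, ?_, ?_⟩, ?_⟩
      · rintro ⟨⟨v, j⟩, hp⟩
        have : j = z := ((hTmem (v, j)).mp hp).2
        subst this; rfl
      · rintro ⟨v, hv⟩; rfl
      · rintro ⟨⟨v, j⟩, hp⟩ ⟨⟨w, j'⟩, hq⟩
        have hjz : j = z := ((hTmem (v, j)).mp hp).2
        have hjz' : j' = z := ((hTmem (w, j')).mp hq).2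
        subst hjz; subst hjz'
        simp only [comap_adj, Function.Embedding.coe_subtype, boxProd_adj]
        simp
    exact (Iso.connected_iff e).mpr hconn
end

section
/- Let G be a connected finite simple graph with at least 3 vertices and let C_n be the cycle on n ≥ 3 vertices. Then γ_{P,c}(G □ C_n) ≤ 2·γ_c(G). -/
open SimpleGraph

variable {V : Type*} {α β : Type*}

open Fin.NatCast Fin.CommRing

section Aux

lemma cycle_adj_succ {n : ℕ} (hn : 3 ≤ n) (i : Fin n) :
    haveI : NeZero n := ⟨by omega⟩
    (cycleGraph n).Adj i (i + 1) := by
  haveI : NeZero n := ⟨by omega⟩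
  rw [cycleGraph_adj']
  right
  have : i + 1 - i = 1 := by ring
  rw [this]
  simp [Fin.val_one', Nat.mod_eq_of_lt (by omega : 1 < n)]

lemma cycle_adj_cases {n : ℕ} (hn : 3 ≤ n) {i j : Fin n}
    (h : (cycleGraph n).Adj i j) :
    haveI : NeZero n := ⟨by omega⟩
    j = i + 1 ∨ j = i - 1 := by
  haveI : NeZero n := ⟨by omega⟩
  rw [cycleGraph_adj'] at h
  have h1 : (1 : Fin n).val = 1 := by
    simp [Fin.val_one', Nat.mod_eq_of_lt (by omega : 1 < n)]
  rcases h with h | h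
  · right
    have : i - j = 1 := Fin.ext (by rw [h, h1])
    rw [← this]; ring
  · left
    have : j - i = 1 := Fin.ext (by rw [h, h1])
    rw [← this]; ring

end Aux

/-- `γ_{P,c}(G □ C_n) ≤ 2·γ_c(G)`. -/
theorem stmt_6 {α : Type*} [Fintype α]
    (G : SimpleGraph α) (hG : G.Connected)
    (hGcard : 3 ≤ Fintype.card α)
    (n : ℕ) (hn : 3 ≤ n) :
    cpdn (G □ cycleGraph n) ≤ 2 * cdomNum G := by
  haveI : NeZero n := ⟨by omega⟩
  classical
  -- obtain a minimum connected dominating set D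
  have hne : {m | ∃ S : Finset α, S.card = m ∧ IsCDS G (S : Set α)}.Nonempty := by
    refine ⟨Fintype.card α, Finset.univ, Finset.card_univ, ?_, ?_⟩
    · intro v; exact ⟨v, Finset.mem_coe.mpr (Finset.mem_univ v), Or.inl rfl⟩
    · have : (Finset.univ : Finset α) = (Set.univ : Set α) := by simp
      rw [this]
      exact (induceUnivIso G).connected_iff.mpr hG
  obtain ⟨D, hDcard, hDdom, hDconn⟩ := Nat.sInf_mem hne
  -- the candidate set
  set T : Finset (Fin n) := {0, 1} with hT
  have h01 : (0 : Fin n) ≠ 1 := by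
    intro h
    have := congrArg Fin.val h
    simp [Fin.val_one', Nat.mod_eq_of_lt (by omega : 1 < n)] at this
  set S : Finset (α × Fin n) := D ×ˢ T with hS
  have hScard : S.card = 2 * cdomNum G := by
    rw [hS, Finset.card_product, hT, Finset.card_insert_of_notMem (by simpa using h01),
      Finset.card_singleton, hDcard]
    have hcd : cdomNum G = sInf {m | ∃ S : Finset α, S.card = m ∧ IsCDS G (S : Set α)} := rfl
    rw [hcd]; ring
  -- adjacency 0 1 in the cycle
  have hadj01 : (cycleGraph n).Adj 0 1 := by
    have := cycle_adj_succ hn (0 : Fin n)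
    simpa using this
  -- membership in S
  have hmemS : ∀ (v : α) (j : Fin n), v ∈ D → j ∈ T → (v, j) ∈ (S : Set (α × Fin n)) := by
    intro v j hv hj
    simp only [hS, Finset.coe_product, Set.mem_prod]
    exact ⟨hv, hj⟩
  -- Step 1 : layers 0 and 1 are monitored
  have step1 : ∀ (v : α) (j : Fin n), j ∈ T →
      Monitored (G □ cycleGraph n) (S : Set (α × Fin n)) (v, j) := by
    intro v j hj
    obtain ⟨u, hu, heq | hadjv⟩ := hDdom v
    · exact Monitored.mem (heq ▸ hmemS u j (Finset.mem_coe.mp hu) hj)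
    · exact Monitored.dom (hmemS u j (Finset.mem_coe.mp hu) hj)
        (Or.inl ⟨hadjv, rfl⟩)
  have h0T : (0 : Fin n) ∈ T := by simp [hT]
  have h1T : (1 : Fin n) ∈ T := by simp [hT]
  -- Step 2 : propagation around the cycle
  have step2 : ∀ k : ℕ, (∀ v, Monitored (G □ cycleGraph n) (S : Set (α × Fin n)) (v, (k : Fin n)))
      ∧ (∀ v, Monitored (G □ cycleGraph n) (S : Set (α × Fin n)) (v, ((k+1 : ℕ) : Fin n))) := by
    intro k
    induction k with
    | zero =>
      constructor
      · intro v; exact step1 v _ (by simpa using h0T)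
      · intro v; exact step1 v _ (by simpa using h1T)
    | succ k ih =>
      obtain ⟨ih0, ih1⟩ := ih
      refine ⟨ih1, ?_⟩
      intro v
      have hcast1 : ((k+1+1 : ℕ) : Fin n) = ((k+1 : ℕ) : Fin n) + 1 := by push_cast; ring
      have hcast0 : ((k+1 : ℕ) : Fin n) - 1 = ((k : ℕ) : Fin n) := by push_cast; ring
      refine Monitored.prop (ih1 v) (w := (v, ((k+1+1 : ℕ) : Fin n))) ?_ ?_
      · refine Or.inr ⟨?_, rfl⟩
        rw [hcast1]
        exact cycle_adj_succ hn _
      · rintro ⟨u1, u2⟩ hadj hne2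
        rcases hadj with ⟨hG', h2⟩ | ⟨hC', h1'⟩
        · simp only at hG' h2
          subst h2
          exact ih1 u1
        · simp only at hC' h1'
          subst h1'
          rcases cycle_adj_cases hn hC' with h | h
          · exfalso; apply hne2
            rw [h, ← hcast1]
          · rw [h, hcast0]
            exact ih0 v
  -- every vertex is monitored
  have hPDS : IsPDS (G □ cycleGraph n) (S : Set (α × Fin n)) := by
    rintro ⟨v, j⟩
    have : j = ((j.val : ℕ) : Fin n) := by simp [Fin.cast_val_eq_self]
    rw [this]
    exact (step2 j.val).1 v
  -- connectivity of S in the product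
  have hTconn : ((cycleGraph n).induce (T : Set (Fin n))).Connected := by
    rw [connected_iff]
    constructor
    · rintro ⟨x, hx⟩ ⟨y, hy⟩
      have hx' : x = 0 ∨ x = 1 := by simpa [hT] using hx
      have hy' : y = 0 ∨ y = 1 := by simpa [hT] using hy
      rcases hx' with rfl | rfl <;> rcases hy' with rfl | rfl
      · rfl
      · exact SimpleGraph.Adj.reachable (by exact hadj01)
      · exact SimpleGraph.Adj.reachable (by exact hadj01.symm)
      · rfl
    · exact ⟨⟨0, by simp [hT]⟩⟩
  have e : ((G □ cycleGraph n).induce (S : Set (α × Fin n))) ≃g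
      ((G.induce (D : Set α)) □ ((cycleGraph n).induce (T : Set (Fin n)))) := by
    refine ⟨⟨fun x => (⟨x.1.1, (Finset.mem_product.mp (Finset.mem_coe.mp x.2)).1⟩,
        ⟨x.1.2, (Finset.mem_product.mp (Finset.mem_coe.mp x.2)).2⟩),
      fun y => ⟨(y.1.1, y.2.1), Finset.mem_coe.mpr
        (Finset.mem_product.mpr ⟨y.1.2, y.2.2⟩)⟩, ?_, ?_⟩, ?_⟩
    · rintro ⟨⟨a, b⟩, h⟩; rfl
    · rintro ⟨⟨a, ha⟩, ⟨b, hb⟩⟩; rfl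
    · rintro ⟨⟨a, b⟩, hab⟩ ⟨⟨c, d⟩, hcd⟩
      simp only [Equiv.coe_fn_mk, boxProd_adj, comap_adj, Function.Embedding.coe_subtype,
        Subtype.mk.injEq] <;> rfl
  have hSconn : ((G □ cycleGraph n).induce (S : Set (α × Fin n))).Connected := by
    rw [e.connected_iff]
    exact connected_boxProd.mpr ⟨hDconn, hTconn⟩
  exact Nat.sInf_le ⟨S, hScard, hPDS, hSconn⟩
end

section
/- Let G be a connected finite simple graph with at least 3 vertices and let W_n be the wheel graph obtained by joining a single vertex to every vertex of the cycle C_n, where n ≥ 4. Then γ_{P,c}(G □ W_n) ≤ 3·γ_c(G). -/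
open SimpleGraph

variable {V : Type*} {α β : Type*}

/-- `γ_{P,c}(G □ W_n) ≤ 3·γ_c(G)`. -/
theorem stmt_7 {α : Type*} [Fintype α]
    (G : SimpleGraph α) (hG : G.Connected)
    (hGcard : 3 ≤ Fintype.card α)
    (n : ℕ) (hn : 4 ≤ n) :
    cpdn (G □ wheelGraph n) ≤ 3 * cdomNum G := by
  classical
  obtain ⟨p, rfl⟩ : ∃ p, n = p + 4 := ⟨n - 4, by omega⟩
  set n := p + 4 with hn4
  -- get a minimum connected dominating set
  have hne : {m | ∃ S : Finset α, S.card = m ∧ IsCDS G (S : Set α)}.Nonempty := by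
    refine ⟨Fintype.card α, Finset.univ, Finset.card_univ, ?_, ?_⟩
    · exact fun v => ⟨v, by simp, Or.inl rfl⟩
    · rw [Finset.coe_univ, (induceUnivIso G).connected_iff]; exact hG
  obtain ⟨D, hDcard, hDdom, hDconn⟩ := Nat.sInf_mem hne
  have h01 : ((0 : Fin n) : Fin n) ≠ 1 := by
    simp [Fin.ext_iff, hn4]
  set W := wheelGraph n with hW
  set T : Finset (α × Option (Fin n)) :=
    D ×ˢ ({none, some 0, some 1} : Finset (Option (Fin n))) with hT
  have hmemT : ∀ a x, (a, x) ∈ (T : Set (α × Option (Fin n))) ↔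
      a ∈ D ∧ (x = none ∨ x = some 0 ∨ x = some 1) := by
    intro a x; simp [hT]
  -- hub adjacency helpers
  have hub_adj : ∀ (k : Fin n), W.Adj none (some k) := fun k => trivial
  have hub_adj' : ∀ (k : Fin n), W.Adj (some k) none := fun k => trivial
  -- monitored lemmas
  have L0 : ∀ a ∈ D, ∀ x, Monitored (G □ W) (T : Set _) (a, x) := by
    intro a ha x
    have hmem : (a, none) ∈ (T : Set (α × Option (Fin n))) :=
      (hmemT a none).2 ⟨ha, Or.inl rfl⟩
    cases x with
    | none => exact Monitored.mem hmem
    | some k => exact Monitored.dom hmem (Or.inr ⟨hub_adj k, rfl⟩)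
  have L1 : ∀ a, ∀ x, (x = none ∨ x = some 0 ∨ x = some 1) →
      Monitored (G □ W) (T : Set _) (a, x) := by
    intro a x hx
    obtain ⟨d, hd, hda⟩ := hDdom a
    cases hda with
    | inl h => exact h ▸ L0 d hd x
    | inr h =>
      exact Monitored.dom ((hmemT d x).2 ⟨hd, hx⟩) (Or.inl ⟨h, rfl⟩)
  have L2' : ∀ N : ℕ, ∀ k : Fin n, k.val = N → ∀ a,
      Monitored (G □ W) (T : Set _) (a, some k) := by
    intro N
    induction N using Nat.strong_induction_on with
    | _ N ih =>
      rintro k rfl a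
      by_cases hk : k.val ≤ 1
      · refine L1 a (some k) (Or.inr ?_)
        rcases Nat.le_one_iff_eq_zero_or_eq_one.1 hk with h | h
        · exact Or.inl (by simp [Fin.ext_iff, h, hn4])
        · exact Or.inr (by simp [Fin.ext_iff, h, hn4])
      push_neg at hk
      have hkn := k.isLt
      set m : Fin n := k - 1 with hm
      have h1le : (1 : Fin n) ≤ k := by
        rw [Fin.le_def]; simp [hn4]; omega
      have hmval : m.val = k.val - 1 := by
        rw [hm, Fin.sub_val_of_le h1le]; simp [hn4]
      have hmlt : m < k := by rw [Fin.lt_def]; omega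
      have hkm : k = m + 1 := by rw [hm, sub_add_cancel]
      have hadjmk : W.Adj (some m) (some k) := by
        show (cycleGraph n).Adj m k
        rw [cycleGraph_adj']
        right
        rw [hm, sub_sub_cancel]
        simp [hn4]
      refine Monitored.prop (ih m.val hmlt m rfl a) (Or.inr ⟨hadjmk, rfl⟩) ?_
      rintro ⟨b, y⟩ hadj hvne
      rcases hadj with ⟨hGab, hy⟩ | ⟨hWy, hb⟩
      · simp only at hy
        rw [← hy]
        exact ih m.val hmlt m rfl b
      · simp only at hb hWy
        subst hb
        cases y with
        | none => exact L1 a none (Or.inl rfl)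
        | some j =>
          have hcyc : (cycleGraph n).Adj m j := hWy
          rw [cycleGraph_adj'] at hcyc
          rcases hcyc with h | h
          · -- m - j = 1, so m = 1 + j, j.val < m.val
            have hmj : m = 1 + j := by
              apply sub_eq_iff_eq_add.mp
              rw [Fin.ext_iff, h]; simp [hn4]
            have hjval : (1 + j.val) % n = m.val := by
              rw [hmj]; exact (Fin.add_def 1 j).symm ▸ by simp [Fin.add_def, hn4]
            have hjn := j.isLt
            have hjlt : j.val < k.val := by
              by_cases hlt : 1 + j.val < n
              · rw [Nat.mod_eq_of_lt hlt] at hjval; omega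
              · have : 1 + j.val = n := by omega
                rw [this, Nat.mod_self] at hjval; omega
            exact ih j.val hjlt j rfl a
          · -- j - m = 1, so j = 1 + m = k, contradiction
            exfalso
            apply hvne
            have hj : j = 1 + m := by
              apply sub_eq_iff_eq_add.mp
              rw [Fin.ext_iff, h]; simp [hn4]
            rw [hj, add_comm, ← hkm]
  have L2 : ∀ k : Fin n, ∀ a, Monitored (G □ W) (T : Set _) (a, some k) :=
    fun k a => L2' k.val k rfl a
  have hPDS : IsPDS (G □ W) (T : Set _) := by
    rintro ⟨a, x⟩
    cases x with
    | none => exact L1 a none (Or.inl rfl)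
    | some k => exact L2 k a
  -- connectivity
  have hCconn : ((G □ W).induce (T : Set _)).Connected := by
    obtain ⟨⟨d0, hd0⟩⟩ := hDconn.nonempty
    let f : G.induce (↑D : Set α) →g (G □ W).induce (T : Set _) :=
      { toFun := fun d => ⟨(d.val, none), (hmemT d.val none).2 ⟨d.2, Or.inl rfl⟩⟩,
        map_rel' := fun h => Or.inl ⟨h, rfl⟩ }
    rw [connected_iff]
    constructor
    · rintro ⟨⟨a, x⟩, hax⟩ ⟨⟨b, y⟩, hby⟩
      obtain ⟨haD, -⟩ := (hmemT a x).1 hax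
      obtain ⟨hbD, -⟩ := (hmemT b y).1 hby
      have hhub : ∀ (c : α) (z : Option (Fin n)) (h : (c, z) ∈ (T : Set (α × Option (Fin n)))),
          ((G □ W).induce (T : Set _)).Reachable ⟨(c, z), h⟩
            ⟨(c, none), (hmemT c none).2 ⟨((hmemT c z).1 h).1, Or.inl rfl⟩⟩ := by
        intro c z h
        cases z with
        | none => exact Reachable.refl _
        | some k => exact Adj.reachable (Or.inr ⟨hub_adj' k, rfl⟩)
      refine (hhub a x hax).trans (Reachable.trans ?_ (hhub b y hby).symm)
      exact Reachable.map f (hDconn.preconnected ⟨a, haD⟩ ⟨b, hbD⟩)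
    · exact ⟨⟨(d0, none), (hmemT d0 none).2 ⟨hd0, Or.inl rfl⟩⟩⟩
  -- conclude
  have hcard : T.card = 3 * D.card := by
    rw [hT, Finset.card_product]
    have h3 : ({none, some 0, some 1} : Finset (Option (Fin n))).card = 3 := by
      rw [Finset.card_insert_of_notMem (by simp),
        Finset.card_insert_of_notMem (by simp [h01]), Finset.card_singleton]
    rw [h3, Nat.mul_comm]
  calc cpdn (G □ wheelGraph n) ≤ T.card := Nat.sInf_le ⟨T, rfl, hPDS, hCconn⟩
    _ = 3 * cdomNum G := by rw [hcard, hDcard]; rfl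
end

section
/- For integers 3 ≤ x ≤ y, the connected power domination number of the Cartesian product of stars satisfies γ_{P,c}(K_{1,x} □ K_{1,y}) = x. -/
open SimpleGraph

variable {V : Type*} {α β : Type*}

private abbrev starV (x y : ℕ) := (Fin 1 ⊕ Fin x) × (Fin 1 ⊕ Fin y)

private abbrev SBG (x y : ℕ) : SimpleGraph (starV x y) :=
  completeBipartiteGraph (Fin 1) (Fin x) □ completeBipartiteGraph (Fin 1) (Fin y)

section Upper
variable {x y : ℕ}

private lemma adj_hr (i : Fin x) (b : Fin 1 ⊕ Fin y) (a : Fin 1) :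
    (SBG x y).Adj (Sum.inl a, b) (Sum.inr i, b) := by simp [boxProd_adj]

private lemma adj_hq (j : Fin y) (a : Fin 1 ⊕ Fin x) (c : Fin 1) :
    (SBG x y).Adj (a, Sum.inl c) (a, Sum.inr j) := by simp [boxProd_adj]

private lemma upper (x y : ℕ) (hx : 3 ≤ x) (hxy : x ≤ y) :
    ∃ S : Finset (starV x y), S.card = x ∧ IsCPDS (SBG x y) (S : Set (starV x y)) := by
  haveI : NeZero x := ⟨by omega⟩
  haveI : NeZero y := ⟨by omega⟩
  set h : starV x y := (Sum.inl 0, Sum.inl 0) with hh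
  set S : Finset (starV x y) :=
    insert h ((Finset.univ.erase (0 : Fin x)).image
      (fun i => ((Sum.inr i : Fin 1 ⊕ Fin x), (Sum.inl 0 : Fin 1 ⊕ Fin y)))) with hSdef
  have hinj : Function.Injective
      (fun i : Fin x => ((Sum.inr i : Fin 1 ⊕ Fin x), (Sum.inl 0 : Fin 1 ⊕ Fin y))) := by
    intro a b hab; simpa using hab
  have hmemS : ∀ v, v ∈ S ↔ v = h ∨ ∃ i : Fin x, i ≠ 0 ∧ v = (Sum.inr i, Sum.inl 0) := by
    intro v
    simp only [hSdef, Finset.mem_insert, Finset.mem_image, Finset.mem_erase, Finset.mem_univ,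
      and_true]
    constructor
    · rintro (rfl | ⟨i, hi, rfl⟩)
      · exact Or.inl rfl
      · exact Or.inr ⟨i, hi, rfl⟩
    · rintro (rfl | ⟨i, hi, rfl⟩)
      · exact Or.inl rfl
      · exact Or.inr ⟨i, hi, rfl⟩
  have hScard : S.card = x := by
    rw [hSdef, Finset.card_insert_of_notMem, Finset.card_image_of_injective _ hinj,
      Finset.card_erase_of_mem (Finset.mem_univ _), Finset.card_univ, Fintype.card_fin]
    · have : 0 < x := by omega
      omega
    · simp [hh]
  refine ⟨S, hScard, ?_, ?_⟩
  · -- PDS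
    have hSh : h ∈ (S : Set (starV x y)) := by simp [hSdef]
    have hSr : ∀ i : Fin x, i ≠ 0 → ((Sum.inr i, Sum.inl 0) : starV x y) ∈ (S : Set (starV x y)) := by
      intro i hi; rw [Finset.mem_coe, hmemS]; exact Or.inr ⟨i, hi, rfl⟩
    rintro ⟨a | i, b⟩
    · -- first coordinate is center
      rcases b with c | j
      · -- = h up to Fin 1
        have : a = 0 := Subsingleton.elim _ _
        have : c = 0 := Subsingleton.elim _ _
        subst_vars
        exact Monitored.mem hSh
      · -- q_j
        have : a = 0 := Subsingleton.elim _ _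
        subst this
        exact Monitored.dom hSh (adj_hq j _ 0)
    · rcases b with c | j
      · -- r_i
        have : c = 0 := Subsingleton.elim _ _
        subst this
        by_cases hi : i = 0
        · subst hi; exact Monitored.dom hSh (adj_hr 0 _ 0)
        · exact Monitored.mem (hSr i hi)
      · -- g_{ij}
        by_cases hi : i = 0
        · subst hi
          -- forced by q_j = (inl 0, inr j)
          refine Monitored.prop (v := (Sum.inl 0, Sum.inr j))
            (Monitored.dom hSh (adj_hq j _ 0)) (adj_hr 0 _ 0) ?_
          rintro ⟨a' | i', b'⟩ hadj hne
          · -- u has first coord inl: must be (inl _, inl _)? analyze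
            rw [boxProd_adj] at hadj
            rcases hadj with ⟨h1, h2⟩ | ⟨h1, h2⟩
            · simp [completeBipartiteGraph_adj] at h1
            · -- H.Adj (inr j) b' so b' = inl c'
              rcases b' with c' | j'
              · have : a' = 0 := Subsingleton.elim _ _
                have : c' = 0 := Subsingleton.elim _ _
                subst_vars
                exact Monitored.mem hSh
              · simp [completeBipartiteGraph_adj] at h1
          · rw [boxProd_adj] at hadj
            rcases hadj with ⟨h1, h2⟩ | ⟨h1, h2⟩
            · -- u = (inr i', inr j)
              simp only at h2
              subst h2
              have hi' : i' ≠ 0 := by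
                intro hcon; subst hcon; exact hne rfl
              exact Monitored.dom (hSr i' hi') (adj_hq j _ 0)
            · simp at h2
        · exact Monitored.dom (hSr i hi) (adj_hq j _ 0)
  · -- connected
    have hSh : h ∈ (S : Set (starV x y)) := by simp [hSdef]
    haveI : Nonempty (S : Set (starV x y)) := ⟨⟨h, hSh⟩⟩
    refine Connected.mk fun u v => ?_
    have key : ∀ w : (S : Set (starV x y)),
        ((SBG x y).induce (S : Set (starV x y))).Reachable w ⟨h, hSh⟩ := by
      rintro ⟨w, hw⟩
      rw [Finset.mem_coe, hmemS] at hw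
      rcases hw with rfl | ⟨i, hi, rfl⟩
      · rfl
      · refine SimpleGraph.Adj.reachable ?_
        show (SBG x y).Adj (Sum.inr i, Sum.inl 0) h
        exact (adj_hr i (Sum.inl 0) 0).symm
    exact (key u).trans (key v).symm

private def UR (x y : ℕ) (S : Finset (starV x y)) (i : Fin x) : Prop :=
  ∀ b, ((Sum.inr i, b) : starV x y) ∉ S

private def UC (x y : ℕ) (S : Finset (starV x y)) (j : Fin y) : Prop :=
  ∀ a, ((a, Sum.inr j) : starV x y) ∉ S

private lemma badfree {x y : ℕ} (S : Finset (starV x y))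
    (hpairR : ∀ i : Fin x, UR x y S i → ∃ i', i' ≠ i ∧ UR x y S i')
    (hpairC : ∀ j : Fin y, UC x y S j → ∃ j', j' ≠ j ∧ UC x y S j')
    {v : starV x y} (hm : Monitored (SBG x y) (S : Set (starV x y)) v) :
    ∀ i j, UR x y S i → UC x y S j → v ≠ (Sum.inr i, Sum.inr j) := by
  induction hm with
  | mem hv =>
    intro i j hURi hUCj heq
    subst heq
    exact hURi _ (Finset.mem_coe.mp hv)
  | dom hv hadj =>
    intro i j hURi hUCj heq
    subst heq
    rename_i v'
    obtain ⟨v1, v2⟩ := v'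
    rw [boxProd_adj] at hadj
    rcases hadj with ⟨h1, h2⟩ | ⟨h1, h2⟩
    · simp only at h2; subst h2
      exact hUCj v1 (Finset.mem_coe.mp hv)
    · simp only at h2; subst h2
      exact hURi v2 (Finset.mem_coe.mp hv)
  | prop hmon hadj hall ihv ihall =>
    intro i j hURi hUCj heq
    subst heq
    rename_i v'
    obtain ⟨v1, v2⟩ := v'
    rw [boxProd_adj] at hadj
    rcases hadj with ⟨h1, h2⟩ | ⟨h1, h2⟩
    · -- v = (inl c, inr j), forcer is a column head
      simp only at h1 h2
      subst h2
      have hL : v1.isLeft = true := by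
        simp [completeBipartiteGraph_adj] at h1; exact h1
      obtain ⟨c, rfl⟩ := Sum.isLeft_iff.mp hL
      obtain ⟨i', hi', hURi'⟩ := hpairR i hURi
      have hadj' : (SBG x y).Adj (Sum.inl c, Sum.inr j) (Sum.inr i', Sum.inr j) :=
        adj_hr i' _ c
      have hne : ((Sum.inr i', Sum.inr j) : starV x y) ≠ (Sum.inr i, Sum.inr j) := by
        simp [hi']
      exact ihall _ hadj' hne i' j hURi' hUCj rfl
    · -- v = (inr i, inl c), forcer is a row head
      simp only at h1 h2
      subst h2
      have hL : v2.isLeft = true := by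
        simp [completeBipartiteGraph_adj] at h1; exact h1
      obtain ⟨c, rfl⟩ := Sum.isLeft_iff.mp hL
      obtain ⟨j', hj', hUCj'⟩ := hpairC j hUCj
      have hadj' : (SBG x y).Adj (Sum.inr i, Sum.inl c) (Sum.inr i, Sum.inr j') :=
        adj_hq j' _ c
      have hne : ((Sum.inr i, Sum.inr j') : starV x y) ≠ (Sum.inr i, Sum.inr j) := by
        simp [hj']
      exact ihall _ hadj' hne i j' hURi hUCj' rfl

private lemma walk_fst_eq {x y : ℕ} (S : Set (starV x y))
    (hall : ∀ v ∈ S, (Prod.fst v).isRight = true) :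
    ∀ {a b : S}, ((SBG x y).induce S).Walk a b → (a : starV x y).1 = (b : starV x y).1 := by
  intro a b w
  induction w with
  | nil => rfl
  | cons hadj p ih =>
    rename_i u v w
    have hadj' : (SBG x y).Adj (u : starV x y) (v : starV x y) := hadj
    rw [boxProd_adj] at hadj'
    refine Eq.trans ?_ ih
    rcases hadj' with ⟨h1, h2⟩ | ⟨h1, h2⟩
    · obtain ⟨iu, hu⟩ := Sum.isRight_iff.mp (hall _ u.2)
      obtain ⟨iv, hv⟩ := Sum.isRight_iff.mp (hall _ v.2)
      rw [hu, hv] at h1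
      simp [completeBipartiteGraph_adj] at h1
    · exact h2

private lemma walk_snd_eq {x y : ℕ} (S : Set (starV x y))
    (hall : ∀ v ∈ S, (Prod.snd v).isRight = true) :
    ∀ {a b : S}, ((SBG x y).induce S).Walk a b → (a : starV x y).2 = (b : starV x y).2 := by
  intro a b w
  induction w with
  | nil => rfl
  | cons hadj p ih =>
    rename_i u v w
    have hadj' : (SBG x y).Adj (u : starV x y) (v : starV x y) := hadj
    rw [boxProd_adj] at hadj'
    refine Eq.trans ?_ ih
    rcases hadj' with ⟨h1, h2⟩ | ⟨h1, h2⟩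
    · exact h2
    · obtain ⟨iu, hu⟩ := Sum.isRight_iff.mp (hall _ u.2)
      obtain ⟨iv, hv⟩ := Sum.isRight_iff.mp (hall _ v.2)
      rw [hu, hv] at h1
      simp [completeBipartiteGraph_adj] at h1

private lemma two_untouched_rows {x y : ℕ} (hx : 3 ≤ x) (S : Finset (starV x y))
    (hcard : S.card < x) (hconn : ((SBG x y).induce (S : Set (starV x y))).Connected) :
    ∃ i1 i2 : Fin x, i1 ≠ i2 ∧ UR x y S i1 ∧ UR x y S i2 := by
  classical
  set T : Finset (Fin x) := Finset.univ.filter (fun i => ¬ UR x y S i) with hT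
  have hTmem : ∀ i ∈ T, ∃ b, ((Sum.inr i, b) : starV x y) ∈ S := by
    intro i hi
    rw [hT, Finset.mem_filter] at hi
    have := hi.2
    rw [UR] at this
    push_neg at this
    exact this
  have hTcard : T.card ≤ x - 2 := by
    by_cases hleft : ∃ v ∈ S, (Prod.fst v).isLeft = true
    · -- T injects into the right-first part of S, which is a proper subset
      obtain ⟨v0, hv0, hv0l⟩ := hleft
      have h1 : T.card ≤ (S.filter (fun v => (Prod.fst v).isRight = true)).card := by
        set f : Fin x → starV x y := fun i =>
          (Sum.inr i, if hbad : ∃ b, ((Sum.inr i, b) : starV x y) ∈ S then hbad.choose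
            else Sum.inl 0)
        refine Finset.card_le_card_of_injOn f ?_ ?_
        · intro i hi
          have hbad := hTmem i hi
          rw [Finset.mem_coe, Finset.mem_filter]
          refine ⟨?_, rfl⟩
          simp only [f, dif_pos hbad]
          exact hbad.choose_spec
        · intro i _ i' _ hfeq
          exact Sum.inr.inj (congrArg Prod.fst hfeq)
      have h2 : (S.filter (fun v => (Prod.fst v).isRight = true)).card < S.card := by
        refine Finset.card_lt_card (Finset.filter_ssubset.mpr ⟨v0, hv0, ?_⟩)
        simp_all [Sum.isLeft_iff]
      omega
    · -- all first coordinates are inr: S lives in one row by connectivity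
      push_neg at hleft
      have hall : ∀ v ∈ (S : Set (starV x y)), (Prod.fst v).isRight = true := by
        intro v hv
        have := hleft v (Finset.mem_coe.mp hv)
        cases h : (Prod.fst v) with
        | inl a => rw [h] at this; exact absurd rfl this
        | inr i => rfl
      have hone : ∀ i ∈ T, ∀ i' ∈ T, i = i' := by
        intro i hi i' hi'
        obtain ⟨b, hb⟩ := hTmem i hi
        obtain ⟨b', hb'⟩ := hTmem i' hi'
        have hr : ((SBG x y).induce (S : Set (starV x y))).Reachable
            ⟨(Sum.inr i, b), hb⟩ ⟨(Sum.inr i', b'), hb'⟩ := hconn.preconnected _ _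
        obtain ⟨w⟩ := hr
        exact Sum.inr.inj (walk_fst_eq (S : Set (starV x y)) hall w)
      have := Finset.card_le_one.mpr hone
      omega
  -- now at least two untouched rows
  have hcover : (Finset.univ : Finset (Fin x)) ⊆
      (Finset.univ.filter (fun i => UR x y S i)) ∪ T := by
    intro i _
    rw [Finset.mem_union, hT]
    simp only [Finset.mem_filter, Finset.mem_univ, true_and]
    exact em _
  have hx' : x ≤ (Finset.univ.filter (fun i => UR x y S i)).card + T.card := by
    calc x = (Finset.univ : Finset (Fin x)).card := by simp
    _ ≤ _ := le_trans (Finset.card_le_card hcover) (Finset.card_union_le _ _)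
  have hucard : 1 < (Finset.univ.filter (fun i => UR x y S i)).card := by omega
  obtain ⟨i1, hi1, i2, hi2, hne⟩ := Finset.one_lt_card.mp hucard
  rw [Finset.mem_filter] at hi1 hi2
  exact ⟨i1, i2, hne, hi1.2, hi2.2⟩

private lemma two_untouched_cols {x y : ℕ} (hx : 3 ≤ x) (hxy : x ≤ y) (S : Finset (starV x y))
    (hcard : S.card < x) (hconn : ((SBG x y).induce (S : Set (starV x y))).Connected) :
    ∃ j1 j2 : Fin y, j1 ≠ j2 ∧ UC x y S j1 ∧ UC x y S j2 := by
  classical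
  set T : Finset (Fin y) := Finset.univ.filter (fun j => ¬ UC x y S j) with hT
  have hTmem : ∀ j ∈ T, ∃ a, ((a, Sum.inr j) : starV x y) ∈ S := by
    intro j hj
    rw [hT, Finset.mem_filter] at hj
    have := hj.2
    rw [UC] at this
    push_neg at this
    exact this
  have hTcard : T.card ≤ y - 2 := by
    by_cases hleft : ∃ v ∈ S, (Prod.snd v).isLeft = true
    · obtain ⟨v0, hv0, hv0l⟩ := hleft
      have h1 : T.card ≤ (S.filter (fun v => (Prod.snd v).isRight = true)).card := by
        set f : Fin y → starV x y := fun j =>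
          (if hbad : ∃ a, ((a, Sum.inr j) : starV x y) ∈ S then hbad.choose
            else Sum.inl 0, Sum.inr j)
        refine Finset.card_le_card_of_injOn f ?_ ?_
        · intro j hj
          have hbad := hTmem j hj
          rw [Finset.mem_coe, Finset.mem_filter]
          refine ⟨?_, rfl⟩
          simp only [f, dif_pos hbad]
          exact hbad.choose_spec
        · intro j _ j' _ hfeq
          exact Sum.inr.inj (congrArg Prod.snd hfeq)
      have h2 : (S.filter (fun v => (Prod.snd v).isRight = true)).card < S.card := by
        refine Finset.card_lt_card (Finset.filter_ssubset.mpr ⟨v0, hv0, ?_⟩)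
        simp_all [Sum.isLeft_iff]
      omega
    · push_neg at hleft
      have hall : ∀ v ∈ (S : Set (starV x y)), (Prod.snd v).isRight = true := by
        intro v hv
        have := hleft v (Finset.mem_coe.mp hv)
        cases h : (Prod.snd v) with
        | inl a => rw [h] at this; exact absurd rfl this
        | inr i => rfl
      have hone : ∀ j ∈ T, ∀ j' ∈ T, j = j' := by
        intro j hj j' hj'
        obtain ⟨a, ha⟩ := hTmem j hj
        obtain ⟨a', ha'⟩ := hTmem j' hj'
        have hr : ((SBG x y).induce (S : Set (starV x y))).Reachable
            ⟨(a, Sum.inr j), ha⟩ ⟨(a', Sum.inr j'), ha'⟩ := hconn.preconnected _ _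
        obtain ⟨w⟩ := hr
        exact Sum.inr.inj (walk_snd_eq (S : Set (starV x y)) hall w)
      have := Finset.card_le_one.mpr hone
      omega
  have hcover : (Finset.univ : Finset (Fin y)) ⊆
      (Finset.univ.filter (fun j => UC x y S j)) ∪ T := by
    intro j _
    rw [Finset.mem_union, hT]
    simp only [Finset.mem_filter, Finset.mem_univ, true_and]
    exact em _
  have hy' : y ≤ (Finset.univ.filter (fun j => UC x y S j)).card + T.card := by
    calc y = (Finset.univ : Finset (Fin y)).card := by simp
    _ ≤ _ := le_trans (Finset.card_le_card hcover) (Finset.card_union_le _ _)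
  have hucard : 1 < (Finset.univ.filter (fun j => UC x y S j)).card := by omega
  obtain ⟨j1, hj1, j2, hj2, hne⟩ := Finset.one_lt_card.mp hucard
  rw [Finset.mem_filter] at hj1 hj2
  exact ⟨j1, j2, hne, hj1.2, hj2.2⟩


private lemma lower_bound (x y : ℕ) (hx : 3 ≤ x) (hxy : x ≤ y) (S : Finset (starV x y))
    (hS : IsCPDS (SBG x y) (S : Set (starV x y))) : x ≤ S.card := by
  by_contra hlt
  push_neg at hlt
  obtain ⟨i1, i2, hi12, hURi1, hURi2⟩ := two_untouched_rows hx S hlt hS.2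
  obtain ⟨j1, j2, hj12, hUCj1, hUCj2⟩ := two_untouched_cols hx hxy S hlt hS.2
  have hpairR : ∀ i : Fin x, UR x y S i → ∃ i', i' ≠ i ∧ UR x y S i' := by
    intro i _
    by_cases h : i = i1
    · exact ⟨i2, by rw [h]; exact hi12.symm, hURi2⟩
    · exact ⟨i1, fun hc => h hc.symm, hURi1⟩
  have hpairC : ∀ j : Fin y, UC x y S j → ∃ j', j' ≠ j ∧ UC x y S j' := by
    intro j _
    by_cases h : j = j1
    · exact ⟨j2, by rw [h]; exact hj12.symm, hUCj2⟩
    · exact ⟨j1, fun hc => h hc.symm, hUCj1⟩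
  exact badfree S hpairR hpairC (hS.1 (Sum.inr i1, Sum.inr j1)) i1 j1 hURi1 hUCj1 rfl

/-- `γ_{P,c}(K_{1,x} □ K_{1,y}) = x` for `3 ≤ x ≤ y`. -/
theorem stmt_11 (x y : ℕ) (hx : 3 ≤ x) (hxy : x ≤ y) :
    cpdn (completeBipartiteGraph (Fin 1) (Fin x) □ completeBipartiteGraph (Fin 1) (Fin y)) =
      x := by
  refine le_antisymm ?_ ?_
  · obtain ⟨S, hcard, hcpds⟩ := upper x y hx hxy
    exact Nat.sInf_le ⟨S, hcard, hcpds⟩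
  · obtain ⟨S, hcard, hcpds⟩ := upper x y hx hxy
    refine le_csInf ⟨x, S, hcard, hcpds⟩ ?_
    rintro n ⟨T, hTcard, hT⟩
    exact hTcard ▸ lower_bound x y hx hxy T hT
end Upper
end

section
/- Let G be a connected finite simple graph with at least 2 vertices having a universal vertex (γ(G) = 1), and for an integer n ≥ 2 let H = G ∘ K̄_n be the lexicographic product of G with the empty graph on n vertices. Then for every integer m ≥ 2, γ_{P,c}(H □ P_m) = 2. -/
open SimpleGraph

variable {V : Type*} {α β : Type*}

lemma monitored_subset {G : SimpleGraph V} {S : Set V} (Q : Set V)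
    (hSQ : ∀ s ∈ S, s ∈ Q) (hNQ : ∀ s ∈ S, ∀ z, G.Adj s z → z ∈ Q)
    (hQ : ∀ v ∈ Q, ∀ w, G.Adj v w → w ∉ Q → ∃ u, G.Adj v u ∧ u ∉ Q ∧ u ≠ w) :
    ∀ z, Monitored G S z → z ∈ Q := by
  intro z hz
  induction hz with
  | mem h => exact hSQ _ h
  | dom hs hadj => exact hNQ _ hs _ hadj
  | prop hv hadj hall ihv ihall =>
    by_contra hw
    obtain ⟨u, hu1, hu2, hu3⟩ := hQ _ ihv _ hadj hw
    exact hu2 (ihall u hu1 hu3)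

lemma pick_aux {W : Type*} {K : SimpleGraph W} {Q : Set W} {v w u1 u2 : W}
    (h12 : u1 ≠ u2) (a1 : K.Adj v u1) (a2 : K.Adj v u2)
    (q1 : u1 ∉ Q) (q2 : u2 ∉ Q) : ∃ u, K.Adj v u ∧ u ∉ Q ∧ u ≠ w := by
  by_cases h : u1 = w
  · exact ⟨u2, a2, q2, by rintro rfl; exact h12 h⟩
  · exact ⟨u1, a1, q1, h⟩

lemma path_exists_adj {m : ℕ} (hm : 2 ≤ m) (k : Fin m) :
    ∃ k' : Fin m, (pathGraph m).Adj k k' := by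
  by_cases h : k.val + 1 < m
  · exact ⟨⟨k.val + 1, h⟩, pathGraph_adj.mpr (Or.inl rfl)⟩
  · exact ⟨⟨k.val - 1, by omega⟩, pathGraph_adj.mpr (Or.inr (by simp; omega))⟩

lemma lexProd_adj {G : SimpleGraph α} {H : SimpleGraph β} {x y : α × β} :
    (lexProd G H).Adj x y ↔ G.Adj x.1 y.1 ∨ (x.1 = y.1 ∧ H.Adj x.2 y.2) := Iff.rfl

/-- If `γ(G) = 1` and `H = G ∘ K̄_n`, then `γ_{P,c}(H □ P_m) = 2` for `n, m ≥ 2`. -/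
theorem stmt_13 {α : Type*} [Fintype α]
    (G : SimpleGraph α) (hG : G.Connected)
    (hGcard : 2 ≤ Fintype.card α)
    (hGuniv : ∃ v, _root_.IsUniversal G v)
    (n m : ℕ) (hn : 2 ≤ n) (hm : 2 ≤ m) :
    cpdn ((lexProd G (⊥ : SimpleGraph (Fin n))) □ pathGraph m) = 2 := by
  classical
  obtain ⟨v0, hv0⟩ := hGuniv
  obtain ⟨w0, hw0⟩ := Fintype.exists_ne_of_one_lt_card (by omega) v0
  set K := (lexProd G (⊥ : SimpleGraph (Fin n))) □ pathGraph m with hK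
  set s1 : (α × Fin n) × Fin m := ((v0, ⟨0, by omega⟩), ⟨0, by omega⟩) with hs1
  set s2 : (α × Fin n) × Fin m := ((w0, ⟨0, by omega⟩), ⟨0, by omega⟩) with hs2
  have hs12 : s1 ≠ s2 := by
    intro h
    exact hw0 (congrArg (fun p => p.1.1) h).symm
  have hadj12 : K.Adj s1 s2 := by
    rw [hK]
    exact Or.inl ⟨Or.inl (hv0 w0 hw0), rfl⟩
  -- layers are monitored
  have layer : ∀ k : ℕ, ∀ hk : k < m, ∀ (x : α) (i : Fin n),
      Monitored K (↑({s1, s2} : Finset ((α × Fin n) × Fin m))) ((x, i), ⟨k, hk⟩) := by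
    intro k
    induction k using Nat.strong_induction_on with
    | _ k IH =>
      rcases k with _ | k
      · intro hk x i
        by_cases hx : x = v0
        · subst hx
          refine Monitored.dom (v := s2) (by simp) ?_
          rw [hK]
          exact Or.inl ⟨Or.inl (hv0 w0 hw0).symm, rfl⟩
        · refine Monitored.dom (v := s1) (by simp) ?_
          rw [hK]
          exact Or.inl ⟨Or.inl (hv0 x hx), rfl⟩
      · intro hk x i
        have hk' : k < m := by omega
        refine Monitored.prop (v := ((x, i), ⟨k, hk'⟩)) (IH k (by omega) hk' x i) ?_ ?_
        · rw [hK]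
          exact Or.inr ⟨pathGraph_adj.mpr (Or.inl rfl), rfl⟩
        · rintro ⟨⟨ux, ui⟩, uk⟩ hadj hne
          rw [hK] at hadj
          rcases (boxProd_adj.mp hadj) with ⟨hH, h2⟩ | ⟨hP, h1⟩
          · simp only at h2
            subst h2
            exact IH k (by omega) hk' ux ui
          · simp only at h1
            injection h1 with e1 e2
            subst e1; subst e2
            simp only at hP
            have hP' : k + 1 = uk.val ∨ uk.val + 1 = k := by
              simpa using pathGraph_adj.mp hP
            rcases hP' with hfwd | hbwd
            · exact absurd (by simp [Prod.ext_iff, Fin.ext_iff]; omega) hne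
            · exact IH uk.val (by omega) uk.isLt x i
  have hPDS : IsPDS K (↑({s1, s2} : Finset ((α × Fin n) × Fin m))) := by
    rintro ⟨⟨x, i⟩, k⟩
    exact layer k.val k.isLt x i
  have hconn : (K.induce (↑({s1, s2} : Finset ((α × Fin n) × Fin m)))).Connected := by
    have hne : ((↑({s1, s2} : Finset ((α × Fin n) × Fin m))) : Set _).Nonempty :=
      ⟨s1, by simp⟩
    haveI := hne.to_subtype
    refine ⟨?_⟩
    rintro ⟨x, hx⟩ ⟨y, hy⟩
    simp only [Finset.coe_insert, Finset.coe_singleton, Set.mem_insert_iff,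
      Set.mem_singleton_iff] at hx hy
    rcases hx with rfl | rfl <;> rcases hy with rfl | rfl
    · exact Reachable.refl _
    · exact Adj.reachable hadj12
    · exact Adj.reachable hadj12.symm
    · exact Reachable.refl _
  have h2A : 2 ∈ {c | ∃ S : Finset ((α × Fin n) × Fin m), S.card = c ∧ IsCPDS K ↑S} :=
    ⟨{s1, s2}, Finset.card_pair hs12, hPDS, hconn⟩
  have hlb : ∀ c ∈ {c | ∃ S : Finset ((α × Fin n) × Fin m), S.card = c ∧ IsCPDS K ↑S},
      2 ≤ c := by
    rintro c ⟨S, hcard, hP, hC⟩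
    by_contra hc
    push_neg at hc
    interval_cases c
    · obtain ⟨⟨z, hz⟩⟩ := hC.nonempty
      rw [Finset.card_eq_zero] at hcard
      subst hcard
      simp at hz
    · obtain ⟨s, rfl⟩ := Finset.card_eq_one.mp hcard
      obtain ⟨⟨a, b⟩, k⟩ := s
      obtain ⟨b', hb'⟩ : ∃ b' : Fin n, b' ≠ b := by
        obtain ⟨b', h⟩ := Fintype.exists_ne_of_one_lt_card (by simp; omega) b
        exact ⟨b', h⟩
      obtain ⟨k', hkk'⟩ := path_exists_adj hm k
      have hk'ne : k ≠ k' := (pathGraph m).ne_of_adj hkk'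
      set Q : Set ((α × Fin n) × Fin m) :=
        {z | z = ((a, b), k) ∨ K.Adj ((a, b), k) z} with hQdef
      have hSQ : ∀ s' ∈ (↑({((a, b), k)} : Finset ((α × Fin n) × Fin m)) : Set _),
          s' ∈ Q := by
        intro s' hs'
        simp only [Finset.coe_singleton, Set.mem_singleton_iff] at hs'
        exact Or.inl hs'
      have hNQ : ∀ s' ∈ (↑({((a, b), k)} : Finset ((α × Fin n) × Fin m)) : Set _),
          ∀ z, K.Adj s' z → z ∈ Q := by
        intro s' hs' z hz
        simp only [Finset.coe_singleton, Set.mem_singleton_iff] at hs'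
        subst hs'
        exact Or.inr hz
      have hQmain : ∀ v ∈ Q, ∀ w, K.Adj v w → w ∉ Q →
          ∃ u, K.Adj v u ∧ u ∉ Q ∧ u ≠ w := by
        rintro ⟨⟨vx, vi⟩, vk⟩ hv w hvw hw
        rcases hv with hveq | hvadj
        · rw [hveq] at hvw
          exact absurd (Or.inr hvw) hw
        · rw [hK] at hvadj
          rcases (boxProd_adj.mp hvadj) with ⟨hH, hkv⟩ | ⟨hPk, hfst⟩
          · simp only at hH hkv
            subst hkv
            rcases hH with hG1 | ⟨_, hbot⟩
            swap
            · exact absurd hbot (by simp)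
            have hne_ax : a ≠ vx := hG1.ne
            refine pick_aux (u1 := ((a, b'), k)) (u2 := ((vx, vi), k')) ?_ ?_ ?_ ?_ ?_
            · intro h
              exact hne_ax (congrArg (fun p => p.1.1) h)
            · rw [hK]
              exact Or.inl ⟨Or.inl hG1.symm, rfl⟩
            · rw [hK]
              exact Or.inr ⟨hkk', rfl⟩
            · rintro (heq | hadj)
              · exact hb' (congrArg (fun p => p.1.2) heq)
              · rw [hK] at hadj
                rcases (boxProd_adj.mp hadj) with ⟨hH2, _⟩ | ⟨hP2, _⟩
                · rcases hH2 with h | ⟨_, h⟩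
                  · exact G.irrefl h
                  · exact absurd h (by simp)
                · exact (pathGraph m).irrefl hP2
            · rintro (heq | hadj)
              · exact hne_ax (congrArg (fun p => p.1.1) heq).symm
              · rw [hK] at hadj
                rcases (boxProd_adj.mp hadj) with ⟨_, hsnd⟩ | ⟨_, hfst2⟩
                · exact hk'ne hsnd
                · exact hne_ax (congrArg Prod.fst hfst2)
          · simp only at hPk hfst
            injection hfst with e1 e2
            subst e1; subst e2
            have hvkne : k ≠ vk := (pathGraph m).ne_of_adj hPk
            obtain ⟨x0, hx0⟩ : ∃ x0, G.Adj a x0 := by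
              by_cases ha : a = v0
              · exact ⟨w0, ha ▸ hv0 w0 hw0⟩
              · exact ⟨v0, (hv0 a ha).symm⟩
            have hax0 : a ≠ x0 := hx0.ne
            refine pick_aux (u1 := ((x0, ⟨0, by omega⟩), vk))
              (u2 := ((x0, ⟨1, by omega⟩), vk)) ?_ ?_ ?_ ?_ ?_
            · simp [Prod.ext_iff, Fin.ext_iff]
            · rw [hK]
              exact Or.inl ⟨Or.inl hx0, rfl⟩
            · rw [hK]
              exact Or.inl ⟨Or.inl hx0, rfl⟩
            · rintro (heq | hadj)
              · exact hvkne (congrArg Prod.snd heq).symm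
              · rw [hK] at hadj
                rcases (boxProd_adj.mp hadj) with ⟨_, hsnd⟩ | ⟨_, hfst2⟩
                · exact hvkne hsnd
                · exact hax0 (congrArg Prod.fst hfst2)
            · rintro (heq | hadj)
              · exact hvkne (congrArg Prod.snd heq).symm
              · rw [hK] at hadj
                rcases (boxProd_adj.mp hadj) with ⟨_, hsnd⟩ | ⟨_, hfst2⟩
                · exact hvkne hsnd
                · exact hax0 (congrArg Prod.fst hfst2)
      have hall := monitored_subset Q hSQ hNQ hQmain
      have hmem := hall ((a, b'), k) (hP ((a, b'), k))
      rcases hmem with heq | hadj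
      · exact hb' (congrArg (fun p => p.1.2) heq)
      · rw [hK] at hadj
        rcases (boxProd_adj.mp hadj) with ⟨hH2, _⟩ | ⟨hP2, _⟩
        · rcases hH2 with h | ⟨_, h⟩
          · exact G.irrefl h
          · exact absurd h (by simp)
        · exact (pathGraph m).irrefl hP2
  unfold cpdn
  exact le_antisymm (Nat.sInf_le h2A) (le_csInf ⟨2, h2A⟩ hlb)
end

section
/- Let G and H be connected finite simple graphs, each non-bipartite and each having at least two universal vertices. Then the connected power domination number of the tensor product satisfies γ_{P,c}(G × H) = 2. -/
open SimpleGraph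

variable {V : Type*} {α β : Type*}

section Helpers

lemma fort_block {V : Type*} {G : SimpleGraph V} {S F : Set V}
    (h1 : ∀ v ∈ F, v ∉ S)
    (h2 : ∀ v ∈ F, ∀ u ∈ S, ¬ G.Adj u v)
    (h3 : ∀ v ∉ F, ∀ w ∈ F, G.Adj v w → ∃ w' ∈ F, w' ≠ w ∧ G.Adj v w') :
    ∀ v, Monitored G S v → v ∉ F := by
  intro v hv
  induction hv with
  | mem h => exact fun hF => h1 _ hF h
  | dom hS hAdj => exact fun hF => h2 _ hF _ hS hAdj
  | prop hm hAdj hall ihv ihall =>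
    intro hwF
    obtain ⟨w', hw'F, hne, hadj'⟩ := h3 _ ihv _ hwF hAdj
    exact ihall w' hadj' hne hw'F

lemma third_vertex {β : Type*} {H : SimpleGraph β} (h : ¬ H.Colorable 2)
    (u v : β) : ∃ t, t ≠ u ∧ t ≠ v := by
  classical
  by_contra hc
  push_neg at hc
  apply h
  have h01 : (0 : Fin 2) ≠ 1 := by decide
  refine ⟨SimpleGraph.Coloring.mk (fun w => if w = u then (0 : Fin 2) else 1) ?_⟩
  intro x y hxy
  by_cases hx : x = u <;> by_cases hy : y = u
  · exact absurd (hx.trans hy.symm) hxy.ne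
  · simpa [hx, hy] using h01
  · simpa [hx, hy] using h01.symm
  · exact absurd ((hc x hx).trans (hc y hy).symm) hxy.ne

lemma pick_ne {β : Type*} {H : SimpleGraph β} {q n1 n2 : β} (h12 : n1 ≠ n2)
    (h1 : H.Adj q n1) (h2 : H.Adj q n2) (r : β) : ∃ r', r' ≠ r ∧ H.Adj q r' := by
  by_cases h : n1 = r
  · exact ⟨n2, fun e => h12 (h.trans e.symm), h2⟩
  · exact ⟨n1, h, h1⟩

lemma two_nbrs {β : Type*} {H : SimpleGraph β} (hnb : ¬ H.Colorable 2)
    {w1 w2 : β} (hne : w1 ≠ w2) (h1 : _root_.IsUniversal H w1) (h2 : _root_.IsUniversal H w2)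
    (q r : β) : ∃ r', r' ≠ r ∧ H.Adj q r' := by
  obtain ⟨t, ht1, ht2⟩ := third_vertex hnb w1 w2
  by_cases hq1 : q = w1
  · subst hq1
    exact pick_ne (Ne.symm ht2) (h1 w2 hne.symm) (h1 t ht1) r
  · by_cases hq2 : q = w2
    · subst hq2
      exact pick_ne (Ne.symm ht1) (h2 w1 hne) (h2 t ht2) r
    · exact pick_ne hne (h1 q hq1).symm (h2 q hq2).symm r

lemma tensor_adj {α β : Type*} {G : SimpleGraph α} {H : SimpleGraph β}
    {x y : α × β} : (tensorProd G H).Adj x y ↔ G.Adj x.1 y.1 ∧ H.Adj x.2 y.2 :=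
  Iff.rfl

end Helpers

/-- If `G` and `H` are non-bipartite with at least two universal vertices each,
then `γ_{P,c}(G × H) = 2`. -/
theorem stmt_15 {α β : Type*} [Fintype α] [Fintype β]
    (G : SimpleGraph α) (H : SimpleGraph β)
    (hG : G.Connected) (hH : H.Connected)
    (hGnb : ¬ G.Colorable 2) (hHnb : ¬ H.Colorable 2)
    (hGuniv : ∃ u v, u ≠ v ∧ _root_.IsUniversal G u ∧ _root_.IsUniversal G v)
    (hHuniv : ∃ u v, u ≠ v ∧ _root_.IsUniversal H u ∧ _root_.IsUniversal H v) :
    cpdn (tensorProd G H) = 2 := by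
  classical
  obtain ⟨u1, u2, huu, hu1, hu2⟩ := hGuniv
  obtain ⟨w1, w2, hww, hw1, hw2⟩ := hHuniv
  obtain ⟨t, ht1, ht2⟩ := third_vertex hHnb w1 w2
  -- 2 is attained
  have h2mem : 2 ∈ {n | ∃ S : Finset (α × β), S.card = n ∧
      IsCPDS (tensorProd G H) (S : Set (α × β))} := by
    refine ⟨{(u1, w1), (u2, w2)}, ?_, ?_, ?_⟩
    · exact Finset.card_pair (fun h => huu (congrArg Prod.fst h))
    · -- power dominating
      have hdom : ∀ p : α × β, p ≠ (u1, w2) → p ≠ (u2, w1) →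
          Monitored (tensorProd G H)
            (↑({(u1, w1), (u2, w2)} : Finset (α × β))) p := by
        rintro ⟨x, y⟩ hp1 hp2
        by_cases hx : x = u1
        · by_cases hy : y = w1
          · exact Monitored.mem (by simp [hx, hy])
          · have hy2 : y ≠ w2 := fun e => hp1 (by rw [hx, e])
            refine Monitored.dom (v := (u2, w2)) (by simp)
              (tensor_adj.mpr ⟨?_, hw2 y hy2⟩)
            rw [hx]; exact hu2 u1 huu
        · by_cases hy : y = w1
          · have hx2 : x ≠ u2 := fun e => hp2 (by rw [e, hy])
            refine Monitored.dom (v := (u2, w2)) (by simp)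
              (tensor_adj.mpr ⟨hu2 x hx2, ?_⟩)
            rw [hy]; exact hw2 w1 hww
          · exact Monitored.dom (v := (u1, w1)) (by simp)
              (tensor_adj.mpr ⟨hu1 x hx, hw1 y hy⟩)
      have hm12 : Monitored (tensorProd G H)
          (↑({(u1, w1), (u2, w2)} : Finset (α × β))) (u1, w2) := by
        refine Monitored.prop (v := (u2, t))
          (hdom (u2, t) (fun e => huu (congrArg Prod.fst e).symm)
            (fun e => ht1 (congrArg Prod.snd e)))
          (tensor_adj.mpr ⟨hu2 u1 huu, (hw2 t ht2).symm⟩) ?_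
        intro u' hadj hne
        exact hdom u' hne (fun e => ((tensor_adj.mp hadj).1).ne (by rw [e]))
      have hm21 : Monitored (tensorProd G H)
          (↑({(u1, w1), (u2, w2)} : Finset (α × β))) (u2, w1) := by
        refine Monitored.prop (v := (u1, t))
          (hdom (u1, t) (fun e => ht2 (congrArg Prod.snd e))
            (fun e => huu (congrArg Prod.fst e)))
          (tensor_adj.mpr ⟨hu1 u2 huu.symm, (hw1 t ht1).symm⟩) ?_
        intro u' hadj hne
        exact hdom u' (fun e => ((tensor_adj.mp hadj).1).ne (by rw [e])) hne
      intro v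
      by_cases hv1 : v = (u1, w2)
      · exact hv1 ▸ hm12
      · by_cases hv2 : v = (u2, w1)
        · exact hv2 ▸ hm21
        · exact hdom v hv1 hv2
    · -- connected
      have hadj12 : (tensorProd G H).Adj (u1, w1) (u2, w2) :=
        tensor_adj.mpr ⟨hu1 u2 huu.symm, hw1 w2 hww.symm⟩
      rw [connected_iff]
      refine ⟨?_, ⟨⟨(u1, w1), by simp⟩⟩⟩
      have key : ∀ x : (↑({(u1, w1), (u2, w2)} : Finset (α × β)) : Set (α × β)),
            ((tensorProd G H).induce _).Reachable x
              ⟨(u1, w1), by simp⟩ := by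
          rintro ⟨v, hv⟩
          simp only [Finset.coe_insert, Finset.coe_singleton, Set.mem_insert_iff,
            Set.mem_singleton_iff] at hv
          rcases hv with hv | hv
          · subst hv; exact Reachable.refl _
          · subst hv
            exact SimpleGraph.Adj.reachable (by exact hadj12.symm)
      intro x y
      exact (key x).trans (key y).symm
  -- lower bound
  have hlow : ∀ n ∈ {n | ∃ S : Finset (α × β), S.card = n ∧
      IsCPDS (tensorProd G H) (S : Set (α × β))}, 2 ≤ n := by
    rintro n ⟨S, hcard, hPDS, hConn⟩
    by_contra hn
    push_neg at hn
    interval_cases n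
    · -- n = 0
      obtain ⟨⟨x, hx⟩⟩ := hConn.nonempty
      rw [Finset.card_eq_zero.mp hcard] at hx
      simp at hx
    · -- n = 1
      obtain ⟨s, rfl⟩ := Finset.card_eq_one.mp hcard
      obtain ⟨a, b⟩ := s
      by_cases hA : ∀ x, x ≠ a → G.Adj a x
      · by_cases hB : ∀ y, y ≠ b → H.Adj b y
        · -- both "universal": central fort
          refine fort_block (G := tensorProd G H)
            (S := (↑({(a, b)} : Finset (α × β)) : Set (α × β)))
            (F := {p : α × β | (p.1 = a ∨ p.2 = b) ∧ p ≠ (a, b)})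
            ?_ ?_ ?_ (a, (third_vertex hHnb b b).choose)
            (hPDS _) ?_
          · intro v hv hvS
            simp only [Finset.coe_singleton, Set.mem_singleton_iff] at hvS
            exact hv.2 hvS
          · intro v hv u hu hadj
            simp only [Finset.coe_singleton, Set.mem_singleton_iff] at hu
            subst hu
            obtain ⟨hga, hha⟩ := tensor_adj.mp hadj
            rcases hv.1 with h | h
            · rw [h] at hga; exact G.loopless.irrefl a hga
            · rw [h] at hha; exact H.loopless.irrefl b hha
          · rintro ⟨x, y⟩ hv ⟨p, q⟩ hwF hadj
            obtain ⟨hga, hha⟩ := tensor_adj.mp hadj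
            simp only [Set.mem_setOf_eq] at hv hwF ⊢
            by_cases hx : x = a
            · by_cases hy : y = b
              · rcases hwF.1 with h | h
                · rw [hx, h] at hga; exact absurd hga (G.loopless.irrefl a)
                · rw [hy, h] at hha; exact absurd hha (H.loopless.irrefl b)
              · exact absurd ⟨Or.inl hx, fun e => hy (congrArg Prod.snd e)⟩ hv
            · by_cases hy : y = b
              · exact absurd ⟨Or.inr hy, fun e => hx (congrArg Prod.fst e)⟩ hv
              · obtain ⟨hwF1, hwF2⟩ := hwF
                rcases hwF1 with h | h
                · have hqb : q ≠ b := fun e => hwF2 (by rw [h, e])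
                  obtain ⟨r', hr1, hr2⟩ := two_nbrs hGnb huu hu1 hu2 x a
                  exact ⟨(r', b), ⟨Or.inr rfl, fun e => hr1 (congrArg Prod.fst e)⟩,
                    fun e => hqb ((congrArg Prod.snd e).symm),
                    tensor_adj.mpr ⟨hr2, (hB y hy).symm⟩⟩
                · have hpa : p ≠ a := fun e => hwF2 (by rw [e, h])
                  obtain ⟨r', hr1, hr2⟩ := two_nbrs hHnb hww hw1 hw2 y b
                  exact ⟨(a, r'), ⟨Or.inl rfl, fun e => hr1 (congrArg Prod.snd e)⟩,
                    fun e => hpa ((congrArg Prod.fst e).symm),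
                    tensor_adj.mpr ⟨(hA x hx).symm, hr2⟩⟩
          · exact ⟨Or.inl rfl, fun e =>
              (third_vertex hHnb b b).choose_spec.1 (congrArg Prod.snd e)⟩
        · -- b has a non-neighbor: column fort
          push_neg at hB
          obtain ⟨y, hy1, hy2⟩ := hB
          refine fort_block (G := tensorProd G H)
            (S := (↑({(a, b)} : Finset (α × β)) : Set (α × β)))
            (F := {p : α × β | p.2 = y}) ?_ ?_ ?_ (a, y) (hPDS _) rfl
          · intro v hv hvS
            simp only [Finset.coe_singleton, Set.mem_singleton_iff] at hvS
            subst hvS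
            exact hy1 hv.symm
          · intro v hv u hu hadj
            simp only [Finset.coe_singleton, Set.mem_singleton_iff] at hu
            subst hu
            exact hy2 (hv ▸ (tensor_adj.mp hadj).2)
          · intro v hv w hwF hadj
            obtain ⟨r', hr1, hr2⟩ := two_nbrs hGnb huu hu1 hu2 v.1 w.1
            exact ⟨(r', y), rfl, fun e => hr1 (congrArg Prod.fst e),
              tensor_adj.mpr ⟨hr2, hwF ▸ (tensor_adj.mp hadj).2⟩⟩
      · -- a has a non-neighbor: row fort
        push_neg at hA
        obtain ⟨x, hx1, hx2⟩ := hA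
        refine fort_block (G := tensorProd G H)
          (S := (↑({(a, b)} : Finset (α × β)) : Set (α × β)))
          (F := {p : α × β | p.1 = x}) ?_ ?_ ?_ (x, b) (hPDS _) rfl
        · intro v hv hvS
          simp only [Finset.coe_singleton, Set.mem_singleton_iff] at hvS
          subst hvS
          exact hx1 hv.symm
        · intro v hv u hu hadj
          simp only [Finset.coe_singleton, Set.mem_singleton_iff] at hu
          subst hu
          exact hx2 (hv ▸ (tensor_adj.mp hadj).1)
        · intro v hv w hwF hadj
          obtain ⟨r', hr1, hr2⟩ := two_nbrs hHnb hww hw1 hw2 v.2 w.2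
          exact ⟨(x, r'), rfl, fun e => hr1 (congrArg Prod.snd e),
            tensor_adj.mpr ⟨hwF ▸ (tensor_adj.mp hadj).1, hr2⟩⟩
  exact le_antisymm (Nat.sInf_le h2mem) (le_csInf ⟨2, h2mem⟩ hlow)
end

section
/- Let G be a connected non-bipartite finite simple graph and let 2 ≤ x ≤ y be integers. Then the connected power domination number of the tensor product of G with the complete bipartite graph K_{x,y} equals the connected domination number of the tensor product of G with K_2: γ_{P,c}(G × K_{x,y}) = γ_c(G × K_2). -/
open SimpleGraph

variable {V : Type*} {α β : Type*}

namespace Stmt16Aux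

variable {α : Type*} {x y : ℕ}

def side : Fin x ⊕ Fin y → Fin 2 := Sum.elim (fun _ => 0) (fun _ => 1)

lemma cb_adj (s t : Fin x ⊕ Fin y) :
    (completeBipartiteGraph (Fin x) (Fin y)).Adj s t ↔ side s ≠ side t := by
  cases s <;> cases t <;> simp [side] <;> decide

def proj (p : α × (Fin x ⊕ Fin y)) : α × Fin 2 := (p.1, side p.2)

variable (G : SimpleGraph α)

lemma tensorProd_adj {γ : Type*} (H : SimpleGraph γ) (p q : α × γ) :
    (tensorProd G H).Adj p q ↔ G.Adj p.1 q.1 ∧ H.Adj p.2 q.2 := Iff.rfl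

lemma adj_transfer (p q : α × (Fin x ⊕ Fin y)) :
    (tensorProd G (completeBipartiteGraph (Fin x) (Fin y))).Adj p q ↔
    (tensorProd G (⊤ : SimpleGraph (Fin 2))).Adj (proj p) (proj q) := by
  simp only [tensorProd_adj]
  constructor
  · rintro ⟨h1, h2⟩; exact ⟨h1, (cb_adj _ _).1 h2⟩
  · rintro ⟨h1, h2⟩; exact ⟨h1, (cb_adj _ _).2 h2⟩

variable (hx : 0 < x) (hy : 0 < y)

def rep (d : α × Fin 2) : α × (Fin x ⊕ Fin y) :=
  (d.1, if d.2 = 0 then Sum.inl ⟨0, hx⟩ else Sum.inr ⟨0, hy⟩)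

lemma proj_rep (d : α × Fin 2) : proj (rep hx hy d) = d := by
  rcases d with ⟨a, i⟩
  fin_cases i <;> simp [proj, rep, side]

lemma rep_injective : Function.Injective (rep (α := α) hx hy) :=
  Function.LeftInverse.injective (proj_rep hx hy)


variable [DecidableEq α]

/-- Projection of a CPDS of `G × K_{x,y}` is a CDS of `G × K₂` (needs `2 ≤ x, y`). -/
lemma lower (hx2 : 2 ≤ x) (hy2 : 2 ≤ y)
    (S : Finset (α × (Fin x ⊕ Fin y)))
    (hS : IsCPDS (tensorProd G (completeBipartiteGraph (Fin x) (Fin y))) (S : Set _)) :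
    ∃ D : Finset (α × Fin 2), D.card ≤ S.card ∧
      IsCDS (tensorProd G (⊤ : SimpleGraph (Fin 2))) (D : Set _) := by
  set H := tensorProd G (completeBipartiteGraph (Fin x) (Fin y)) with hH
  set K := tensorProd G (⊤ : SimpleGraph (Fin 2)) with hK
  refine ⟨S.image proj, Finset.card_image_le, ?_, ?_⟩
  · -- domination
    intro c
    by_contra hno
    push_neg at hno
    have key : ∀ w, Monitored H (S : Set _) w → proj w ≠ c := by
      intro w hw
      induction hw with
      | @mem v h =>
        intro hc
        exact (hno (proj v) (Finset.mem_image_of_mem proj h)).1 hc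
      | @dom v w h hadj =>
        intro hc
        have : K.Adj (proj v) (proj w) := (adj_transfer G v w).1 hadj
        rw [hc] at this
        exact (hno (proj v) (Finset.mem_image_of_mem proj h)).2 this
      | @prop v w hv hadj hall ihv ihall =>
        intro hc
        rcases w with ⟨a, s⟩
        cases s with
        | inl i =>
          obtain ⟨i', hi'⟩ : ∃ i' : Fin x, i' ≠ i := by
            by_cases h0 : i = ⟨0, by omega⟩
            · exact ⟨⟨1, by omega⟩, by simp [h0, Fin.ext_iff]⟩
            · exact ⟨⟨0, by omega⟩, fun he => h0 he.symm⟩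
          have hadj' : H.Adj v (a, Sum.inl i') := by
            have hadj0 := (tensorProd_adj G _ v (a, Sum.inl i)).1 hadj
            refine (tensorProd_adj G _ v (a, Sum.inl i')).2 ⟨hadj0.1, (cb_adj _ _).2 ?_⟩
            exact (cb_adj _ _).1 hadj0.2
          have hne : ((a, Sum.inl i') : α × (Fin x ⊕ Fin y)) ≠ (a, Sum.inl i) := by
            simp [hi']
          exact ihall _ hadj' hne (by simpa [proj, side] using hc)
        | inr i =>
          obtain ⟨i', hi'⟩ : ∃ i' : Fin y, i' ≠ i := by
            by_cases h0 : i = ⟨0, by omega⟩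
            · exact ⟨⟨1, by omega⟩, by simp [h0, Fin.ext_iff]⟩
            · exact ⟨⟨0, by omega⟩, fun he => h0 he.symm⟩
          have hadj' : H.Adj v (a, Sum.inr i') := by
            have hadj0 := (tensorProd_adj G _ v (a, Sum.inr i)).1 hadj
            refine (tensorProd_adj G _ v (a, Sum.inr i')).2 ⟨hadj0.1, (cb_adj _ _).2 ?_⟩
            exact (cb_adj _ _).1 hadj0.2
          have hne : ((a, Sum.inr i') : α × (Fin x ⊕ Fin y)) ≠ (a, Sum.inr i) := by
            simp [hi']
          exact ihall _ hadj' hne (by simpa [proj, side] using hc)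
    have hx0 : 0 < x := by omega
    have hy0 : 0 < y := by omega
    exact key _ (hS.1 (rep hx0 hy0 c)) (proj_rep hx0 hy0 c)
  · -- connectivity
    have hconn := hS.2
    obtain ⟨⟨s0, hs0⟩⟩ : Nonempty ↥(S : Set (α × (Fin x ⊕ Fin y))) := hconn.nonempty
    let f : (H.induce (S : Set _)) →g (K.induce ((S.image proj : Finset _) : Set _)) :=
      { toFun := fun p => ⟨proj p.1, by
          simp only [Finset.coe_image, Set.mem_image, Finset.mem_coe]
          exact ⟨p.1, p.2, rfl⟩⟩
        map_rel' := fun h => (adj_transfer G _ _).1 h }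
    rw [connected_iff]
    constructor
    · intro d1 d2
      obtain ⟨p1, hp1, hp1e⟩ : ∃ p ∈ S, proj p = (d1 : α × Fin 2) := by
        have := d1.2; simpa [Finset.coe_image] using this
      obtain ⟨p2, hp2, hp2e⟩ : ∃ p ∈ S, proj p = (d2 : α × Fin 2) := by
        have := d2.2; simpa [Finset.coe_image] using this
      have r := hconn.preconnected ⟨p1, hp1⟩ ⟨p2, hp2⟩
      have r2 := r.map f
      have e1 : f ⟨p1, hp1⟩ = d1 := Subtype.ext hp1e
      have e2 : f ⟨p2, hp2⟩ = d2 := Subtype.ext hp2e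
      rwa [e1, e2] at r2
    · exact ⟨⟨proj s0, by
        simp only [Finset.coe_image, Set.mem_image, Finset.mem_coe]
        exact ⟨s0, hs0, rfl⟩⟩⟩

/-- Lifting a CDS of `G × K₂` gives a CPDS (even a CDS) of `G × K_{x,y}`. -/
lemma upper (hx : 0 < x) (hy : 0 < y) (D : Finset (α × Fin 2))
    (hD : IsCDS (tensorProd G (⊤ : SimpleGraph (Fin 2))) (D : Set _)) :
    ∃ S : Finset (α × (Fin x ⊕ Fin y)), S.card = D.card ∧
      IsCPDS (tensorProd G (completeBipartiteGraph (Fin x) (Fin y))) (S : Set _) := by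
  set H := tensorProd G (completeBipartiteGraph (Fin x) (Fin y)) with hH
  set K := tensorProd G (⊤ : SimpleGraph (Fin 2)) with hK
  refine ⟨D.image (rep hx hy), Finset.card_image_of_injective _ (rep_injective hx hy), ?_⟩
  have hnbr : ∀ c ∈ D, ∃ d ∈ D, K.Adj d c := by
    intro c hc
    by_cases hone : ∀ d ∈ D, d = c
    · exfalso
      obtain ⟨e, he, hec⟩ := hD.1 (c.1, c.2 + 1)
      rw [Finset.mem_coe] at he
      rw [hone e he] at hec
      rcases hec with heq | hadj
      · have h2 : c.2 = c.2 + 1 := congrArg Prod.snd heq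
        have h3 := congrArg Fin.val h2
        simp [Fin.val_add] at h3
        omega
      · exact G.loopless.irrefl c.1 ((tensorProd_adj G _ _ _).1 hadj).1
    · push_neg at hone
      obtain ⟨d, hd, hdc⟩ := hone
      have r := hD.2.preconnected ⟨c, hc⟩ ⟨d, Finset.mem_coe.2 hd⟩
      obtain ⟨w⟩ := r
      cases w with
      | nil => exact absurd rfl hdc
      | @cons _ b _ h p =>
        exact ⟨(b : α × Fin 2), Finset.mem_coe.1 b.2, (h : K.Adj c (b : α × Fin 2)).symm⟩
  have hdomS : IsDomSet H ((D.image (rep hx hy) : Finset _) : Set _) := by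
    intro v
    obtain ⟨u, hu, hu2⟩ := hD.1 (proj v)
    rw [Finset.mem_coe] at hu
    rcases hu2 with rfl | hadj
    · obtain ⟨d, hd, hdadj⟩ := hnbr _ hu
      refine ⟨rep hx hy d, Finset.mem_coe.2 (Finset.mem_image_of_mem _ hd), Or.inr ?_⟩
      refine (adj_transfer G _ _).2 ?_
      rw [proj_rep]
      exact hdadj
    · refine ⟨rep hx hy u, Finset.mem_coe.2 (Finset.mem_image_of_mem _ hu), Or.inr ?_⟩
      refine (adj_transfer G _ _).2 ?_
      rw [proj_rep]
      exact hadj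
  constructor
  · intro v
    obtain ⟨u, hu, hu2⟩ := hdomS v
    rcases hu2 with rfl | hadj
    · exact Monitored.mem hu
    · exact Monitored.dom hu hadj
  · -- connectivity
    have hconn := hD.2
    obtain ⟨⟨d0, hd0⟩⟩ : Nonempty ↥(D : Set (α × Fin 2)) := hconn.nonempty
    let g : (K.induce (D : Set _)) →g (H.induce ((D.image (rep hx hy) : Finset _) : Set _)) :=
      { toFun := fun d => ⟨rep hx hy d.1, by
          simp only [Finset.coe_image, Set.mem_image, Finset.mem_coe]
          exact ⟨d.1, d.2, rfl⟩⟩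
        map_rel' := fun {a b} h => by
          have h2 : K.Adj (proj (rep hx hy a.1)) (proj (rep hx hy b.1)) := by
            rw [proj_rep, proj_rep]; exact h
          exact (adj_transfer G _ _).2 h2 }
    rw [connected_iff]
    constructor
    · intro s1 s2
      obtain ⟨e1, he1, he1e⟩ : ∃ e ∈ D, rep hx hy e = (s1 : α × (Fin x ⊕ Fin y)) := by
        have := s1.2; simpa [Finset.coe_image] using this
      obtain ⟨e2, he2, he2e⟩ : ∃ e ∈ D, rep hx hy e = (s2 : α × (Fin x ⊕ Fin y)) := by
        have := s2.2; simpa [Finset.coe_image] using this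
      have r := hconn.preconnected ⟨e1, he1⟩ ⟨e2, he2⟩
      have r2 := r.map g
      have eq1 : g ⟨e1, he1⟩ = s1 := Subtype.ext he1e
      have eq2 : g ⟨e2, he2⟩ = s2 := Subtype.ext he2e
      rwa [eq1, eq2] at r2
    · exact ⟨⟨rep hx hy d0, by
        simp only [Finset.coe_image, Set.mem_image, Finset.mem_coe]
        exact ⟨d0, hd0, rfl⟩⟩⟩

end Stmt16Aux

lemma sInf_eq_sInf_of_le {A B : Set ℕ}
    (h1 : ∀ n ∈ A, ∃ m ∈ B, m ≤ n) (h2 : ∀ n ∈ B, ∃ m ∈ A, m ≤ n) :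
    sInf A = sInf B := by
  rcases A.eq_empty_or_nonempty with hA | hA
  · rcases B.eq_empty_or_nonempty with hB | hB
    · rw [hA, hB]
    · obtain ⟨n, hn⟩ := hB
      obtain ⟨m, hm, -⟩ := h2 n hn
      rw [hA] at hm
      exact absurd hm (Set.notMem_empty m)
  · have hB : B.Nonempty := by
      obtain ⟨n, hn⟩ := hA
      obtain ⟨m, hm, -⟩ := h1 n hn
      exact ⟨m, hm⟩
    apply le_antisymm
    · obtain ⟨m, hm, hle⟩ := h2 _ (Nat.sInf_mem hB)
      exact le_trans (Nat.sInf_le hm) hle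
    · obtain ⟨m, hm, hle⟩ := h1 _ (Nat.sInf_mem hA)
      exact le_trans (Nat.sInf_le hm) hle


/-- If `G` is non-bipartite and `2 ≤ x ≤ y`, then
`γ_{P,c}(G × K_{x,y}) = γ_c(G × K₂)`. -/
theorem stmt_16 {α : Type*} [Fintype α]
    (G : SimpleGraph α) (hG : G.Connected) (hGnb : ¬ G.Colorable 2)
    (x y : ℕ) (hx : 2 ≤ x) (hxy : x ≤ y) :
    cpdn (tensorProd G (completeBipartiteGraph (Fin x) (Fin y))) =
      cdomNum (tensorProd G (⊤ : SimpleGraph (Fin 2))) := by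
  classical
  have hx0 : 0 < x := by omega
  have hy0 : 0 < y := by omega
  have hy2 : 2 ≤ y := le_trans hx hxy
  unfold cpdn cdomNum
  apply sInf_eq_sInf_of_le
  · rintro n ⟨S, rfl, hS⟩
    obtain ⟨D, hcard, hD⟩ := Stmt16Aux.lower G hx hy2 S hS
    exact ⟨D.card, ⟨D, rfl, hD⟩, hcard⟩
  · rintro n ⟨D, rfl, hD⟩
    obtain ⟨S, hcard, hS⟩ := Stmt16Aux.upper G hx0 hy0 D hD
    exact ⟨S.card, ⟨S, rfl, hS⟩, le_of_eq hcard⟩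
end

section
/- Let G be a connected finite simple graph with at least 3 vertices having at least two universal vertices. Let k ≥ 3 and 1 ≤ m_1 ≤ m_2 ≤ … ≤ m_k be integers, and let K_{m_1,…,m_k} be the complete multipartite graph with parts of sizes m_1, …, m_k. Then γ_{P,c}(G × K_{m_1,…,m_k}) = 2 if m_1 = m_2 = 1, and γ_{P,c}(G × K_{m_1,…,m_k}) = 3 otherwise. -/
open SimpleGraph

variable {V : Type*} {α β : Type*}

section CPDNAux

variable {V : Type*}

lemma natSInf_eq {s : Set ℕ} {N : ℕ} (h1 : N ∈ s) (h2 : ∀ n, n < N → n ∉ s) :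
    sInf s = N := by
  refine le_antisymm (Nat.sInf_le h1) ?_
  by_contra h
  push_neg at h
  exact h2 _ h (Nat.sInf_mem ⟨N, h1⟩)

lemma twins_not_monitored (G : SimpleGraph V) (S : Set V) {p q : V}
    (hpq : p ≠ q) (hN : ∀ r, G.Adj r p ↔ G.Adj r q)
    (hpS : p ∉ S) (hqS : q ∉ S)
    (hpA : ∀ s ∈ S, ¬ G.Adj s p) (hqA : ∀ s ∈ S, ¬ G.Adj s q) :
    ∀ w, Monitored G S w → w ≠ p ∧ w ≠ q := by
  intro w hw
  induction hw with
  | mem h => exact ⟨fun e => hpS (e ▸ h), fun e => hqS (e ▸ h)⟩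
  | dom h1 h2 =>
      exact ⟨fun e => hpA _ h1 (e ▸ h2), fun e => hqA _ h1 (e ▸ h2)⟩
  | prop hv hadj hall ihv ihall =>
      constructor
      · rintro rfl
        exact (ihall q ((hN _).mp hadj) hpq.symm).2 rfl
      · rintro rfl
        exact (ihall p ((hN _).mpr hadj) hpq).1 rfl

lemma adj_of_connected_pair (G : SimpleGraph V) {a b : V} (hab : a ≠ b)
    (h : (G.induce ({a, b} : Set V)).Connected) : G.Adj a b := by
  by_contra hadj
  have hr : (G.induce ({a, b} : Set V)).Reachable ⟨a, by simp⟩ ⟨b, by simp⟩ :=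
    h.preconnected _ _
  obtain ⟨w⟩ := hr
  have step : ∀ {x y : ({a, b} : Set V)}, (G.induce ({a, b} : Set V)).Walk x y →
      x = y ∨ ∃ z, (G.induce ({a, b} : Set V)).Adj x z := by
    intro x y w
    cases w with
    | nil => exact Or.inl rfl
    | cons h' _ => exact Or.inr ⟨_, h'⟩
  rcases step w with heq | ⟨z, hz⟩
  · exact hab (congrArg Subtype.val heq)
  · have hz' : G.Adj a z.val := hz
    have hz2 := z.2
    simp only [Set.mem_insert_iff, Set.mem_singleton_iff] at hz2
    rcases hz2 with e | e
    · rw [e] at hz'; exact G.loopless.irrefl a hz'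
    · rw [e] at hz'; exact hadj hz'

lemma fin_third {k : ℕ} (hk : 3 ≤ k) (a b : Fin k) : ∃ j : Fin k, j ≠ a ∧ j ≠ b := by
  obtain ⟨jv, hjk, hja, hjb⟩ : ∃ jv, jv < k ∧ jv ≠ a.val ∧ jv ≠ b.val := by
    by_cases h0 : a.val = 0 ∨ b.val = 0
    · by_cases h1 : a.val = 1 ∨ b.val = 1
      · exact ⟨2, by omega, by omega, by omega⟩
      · exact ⟨1, by omega, by omega, by omega⟩
    · exact ⟨0, by omega, by omega, by omega⟩
  exact ⟨⟨jv, hjk⟩, fun e => hja (congrArg Fin.val e), fun e => hjb (congrArg Fin.val e)⟩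

lemma exists_third {γ : Type*} [Fintype γ] (h : 3 ≤ Fintype.card γ) (a b : γ) :
    ∃ c, c ≠ a ∧ c ≠ b := by
  classical
  by_contra h'
  push_neg at h'
  have hsub : (Finset.univ : Finset γ) ⊆ {a, b} := by
    intro x _
    by_cases hx : x = a
    · simp [hx]
    · simp [h' x hx]
  have h1 := Finset.card_le_card hsub
  have h2 : ({a, b} : Finset γ).card ≤ 2 :=
    le_trans (Finset.card_insert_le a {b}) (by simp)
  rw [Finset.card_univ] at h1
  omega

lemma two_neighbors {γ : Type*} [Fintype γ] (G : SimpleGraph γ) (hcard : 3 ≤ Fintype.card γ)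
    {u v : γ} (huv : u ≠ v) (hu : _root_.IsUniversal G u) (hv : _root_.IsUniversal G v) (x : γ) :
    ∃ a b, a ≠ b ∧ G.Adj x a ∧ G.Adj x b := by
  obtain ⟨z, hz1, hz2⟩ := exists_third hcard u v
  by_cases hxu : x = u
  · subst hxu
    exact ⟨v, z, Ne.symm hz2, hu v huv.symm, hu z hz1⟩
  · by_cases hxv : x = v
    · subst hxv
      exact ⟨u, z, Ne.symm hz1, hv u huv, hv z hz2⟩
    · exact ⟨u, v, huv, (hu x hxu).symm, (hv x hxv).symm⟩

lemma tensor_multi_adj {γ : Type*} {k : ℕ} {m : Fin k → ℕ} (G : SimpleGraph γ)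
    (p q : γ × Σ i, Fin (m i)) :
    (tensorProd G (completeMultipartiteGraph fun i => Fin (m i))).Adj p q ↔
      G.Adj p.1 q.1 ∧ p.2.1 ≠ q.2.1 := Iff.rfl

lemma no_singleton_pds {γ : Type*} [Fintype γ] {k : ℕ} {m : Fin k → ℕ}
    (G : SimpleGraph γ) (hcard : 3 ≤ Fintype.card γ)
    {u₀ v₀ : γ} (huv : u₀ ≠ v₀) (hu : _root_.IsUniversal G u₀) (hv : _root_.IsUniversal G v₀)
    (hk : 3 ≤ k) (hpos : ∀ i, 1 ≤ m i)
    (g : γ) (h : Σ i, Fin (m i)) :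
    ¬ IsPDS (tensorProd G (completeMultipartiteGraph fun i => Fin (m i))) {(g, h)} := by
  intro hPDS
  have key : ∀ w, Monitored (tensorProd G (completeMultipartiteGraph fun i => Fin (m i)))
      {(g, h)} w →
      ¬ ((w.1 = g ∧ w.2 ≠ h) ∨ (w.2.1 = h.1 ∧ w ≠ (g, h))) := by
    intro w hw
    induction hw with
    | mem hm =>
        rw [Set.mem_singleton_iff] at hm
        subst hm
        rintro (⟨-, h2⟩ | ⟨-, h2⟩) <;> exact h2 rfl
    | @dom v w h1 h2 =>
        rw [Set.mem_singleton_iff] at h1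
        subst h1
        obtain ⟨ha, hb⟩ := h2
        rintro (⟨e1, -⟩ | ⟨e2, -⟩)
        · exact ha.ne' e1
        · exact hb e2.symm
    | @prop v w hmv hadj hall ihv ihall =>
        intro hTw
        obtain ⟨hx, hy⟩ := hadj
        rcases hTw with ⟨hw1, hw2⟩ | ⟨hw2, hwne⟩
        · have hxg : G.Adj v.1 g := hw1 ▸ hx
          have hv1g : v.1 ≠ g := hxg.ne
          have hvy : v.2.1 ≠ h.1 := by
            intro he
            exact ihv (Or.inr ⟨he, fun e => hv1g (congrArg Prod.fst e)⟩)
          obtain ⟨a, b, hab, ha, hb⟩ := two_neighbors G hcard huv hu hv v.1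
          obtain ⟨x', hx'adj, hx'g⟩ : ∃ x', G.Adj v.1 x' ∧ x' ≠ g := by
            by_cases hha : a = g
            · exact ⟨b, hb, fun e => hab (by rw [hha, e])⟩
            · exact ⟨a, ha, hha⟩
          refine ihall (x', h) ⟨hx'adj, hvy⟩ ?_ (Or.inr ⟨rfl, ?_⟩)
          · intro e
            exact hx'g (by rw [← hw1]; exact congrArg Prod.fst e)
          · intro e
            exact hx'g (congrArg Prod.fst e)
        · have hvy : v.2.1 ≠ h.1 := fun e => hy (by rw [e, hw2])
          by_cases hg : G.Adj v.1 g
          · obtain ⟨j, hj1, hj2⟩ := fin_third hk v.2.1 h.1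
            refine ihall (g, ⟨j, ⟨0, hpos j⟩⟩) ⟨hg, Ne.symm hj1⟩ ?_ (Or.inl ⟨rfl, ?_⟩)
            · intro e
              apply hj2
              rw [← hw2]
              exact congrArg (fun p => p.2.1) e
            · intro e
              exact hj2 (congrArg Sigma.fst e)
          · obtain ⟨a, b, hab, ha, hb⟩ := two_neighbors G hcard huv hu hv v.1
            have hag : a ≠ g := fun e => hg (e ▸ ha)
            have hbg : b ≠ g := fun e => hg (e ▸ hb)
            by_cases hwa : w = (a, h)
            · refine ihall (b, h) ⟨hb, hvy⟩ ?_
                (Or.inr ⟨rfl, fun e => hbg (congrArg Prod.fst e)⟩)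
              intro e
              rw [hwa] at e
              exact hab (congrArg Prod.fst e).symm
            · exact ihall (a, h) ⟨ha, hvy⟩ (fun e => hwa e.symm)
                (Or.inr ⟨rfl, fun e => hag (congrArg Prod.fst e)⟩)
  obtain ⟨x', hx'⟩ := Fintype.exists_ne_of_one_lt_card (by omega) g
  exact key (x', h) (hPDS (x', h)) (Or.inr ⟨rfl, fun e => hx' (congrArg Prod.fst e)⟩)

lemma fiber_collapse {k : ℕ} {m : Fin k → ℕ} (y : Σ i, Fin (m i)) (i : Fin k)
    (hmi : m i = 1) (h : y.1 = i) : y = ⟨i, ⟨0, by omega⟩⟩ := by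
  obtain ⟨i', j⟩ := y
  dsimp at h
  subst h
  have hj : j = ⟨0, by omega⟩ := Fin.ext (by have := j.isLt; omega)
  rw [hj]

lemma pair_cpds {γ : Type*} [Fintype γ] {k : ℕ} {m : Fin k → ℕ}
    (G : SimpleGraph γ)
    {u v : γ} (huv : u ≠ v) (hu : _root_.IsUniversal G u) (hv : _root_.IsUniversal G v)
    (h0k : 0 < k) (h1k : 1 < k) (h2k : 2 < k) (hpos : ∀ i, 1 ≤ m i)
    (hm0 : m ⟨0, h0k⟩ = 1) (hm1 : m ⟨1, h1k⟩ = 1) :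
    ∃ S : Finset (γ × Σ i, Fin (m i)), S.card = 2 ∧
      IsCPDS (tensorProd G (completeMultipartiteGraph fun i => Fin (m i))) ↑S := by
  classical
  have adjuv : G.Adj u v := hu v huv.symm
  have adjvu : G.Adj v u := hv u huv
  set c0 : Σ i, Fin (m i) := ⟨⟨0, h0k⟩, ⟨0, hpos _⟩⟩ with hc0
  set c1 : Σ i, Fin (m i) := ⟨⟨1, h1k⟩, ⟨0, hpos _⟩⟩ with hc1
  set c2 : Σ i, Fin (m i) := ⟨⟨2, h2k⟩, ⟨0, hpos _⟩⟩ with hc2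
  have ne01 : (⟨0, h0k⟩ : Fin k) ≠ ⟨1, h1k⟩ := Fin.ne_of_val_ne (by simp)
  have ne10 : (⟨1, h1k⟩ : Fin k) ≠ ⟨0, h0k⟩ := Fin.ne_of_val_ne (by simp)
  have ne02 : (⟨0, h0k⟩ : Fin k) ≠ ⟨2, h2k⟩ := Fin.ne_of_val_ne (by simp)
  have ne12 : (⟨1, h1k⟩ : Fin k) ≠ ⟨2, h2k⟩ := Fin.ne_of_val_ne (by simp)
  have ne20 : (⟨2, h2k⟩ : Fin k) ≠ ⟨0, h0k⟩ := Fin.ne_of_val_ne (by simp)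
  have ne21 : (⟨2, h2k⟩ : Fin k) ≠ ⟨1, h1k⟩ := Fin.ne_of_val_ne (by simp)
  have hne : (u, c0) ≠ (v, c1) := fun e => huv (congrArg Prod.fst e)
  refine ⟨{(u, c0), (v, c1)}, Finset.card_pair hne, ?_⟩
  rw [IsCPDS, Finset.coe_insert, Finset.coe_singleton]
  have hs1 : (u, c0) ∈ ({(u, c0), (v, c1)} : Set (γ × Σ i, Fin (m i))) := Or.inl rfl
  have hs2 : (v, c1) ∈ ({(u, c0), (v, c1)} : Set (γ × Σ i, Fin (m i))) := Or.inr rfl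
  have hmon1 : Monitored (tensorProd G (completeMultipartiteGraph fun i => Fin (m i)))
      {(u, c0), (v, c1)} (v, c0) := by
    refine Monitored.prop (v := (u, c2)) (Monitored.dom hs2 ⟨adjvu, ne12⟩) ⟨adjuv, ne20⟩ ?_
    rintro ⟨x, y⟩ ⟨hax, hay⟩ hne'
    by_cases h0 : y.1 = ⟨0, h0k⟩
    · rw [fiber_collapse y _ hm0 h0] at hne' ⊢
      have hxv : x ≠ v := fun e => hne' (by rw [e])
      exact Monitored.dom hs2 ⟨hv x hxv, ne10⟩
    · exact Monitored.dom hs1 ⟨hax, fun e => h0 e.symm⟩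
  have hmon2 : Monitored (tensorProd G (completeMultipartiteGraph fun i => Fin (m i)))
      {(u, c0), (v, c1)} (u, c1) := by
    refine Monitored.prop (v := (v, c2)) (Monitored.dom hs1 ⟨adjuv, ne02⟩) ⟨adjvu, ne21⟩ ?_
    rintro ⟨x, y⟩ ⟨hax, hay⟩ hne'
    by_cases h1 : y.1 = ⟨1, h1k⟩
    · rw [fiber_collapse y _ hm1 h1] at hne' ⊢
      have hxu : x ≠ u := fun e => hne' (by rw [e])
      exact Monitored.dom hs1 ⟨hu x hxu, ne01⟩
    · exact Monitored.dom hs2 ⟨hax, fun e => h1 e.symm⟩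
  constructor
  · rintro ⟨x, y⟩
    by_cases hxu : x = u
    · subst hxu
      by_cases h1 : y.1 = ⟨1, h1k⟩
      · rw [fiber_collapse y _ hm1 h1]; exact hmon2
      · exact Monitored.dom hs2 ⟨adjvu, fun e => h1 e.symm⟩
    · by_cases hxv : x = v
      · subst hxv
        by_cases h0 : y.1 = ⟨0, h0k⟩
        · rw [fiber_collapse y _ hm0 h0]; exact hmon1
        · exact Monitored.dom hs1 ⟨adjuv, fun e => h0 e.symm⟩
      · by_cases h0 : y.1 = ⟨0, h0k⟩
        · exact Monitored.dom hs2 ⟨hv x hxv, fun e => ne10 (e.trans h0)⟩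
        · exact Monitored.dom hs1 ⟨hu x hxu, fun e => h0 e.symm⟩
  · rw [SimpleGraph.connected_iff]
    constructor
    · have r12 : ((tensorProd G (completeMultipartiteGraph fun i => Fin (m i))).induce
          {(u, c0), (v, c1)}).Adj ⟨(u, c0), hs1⟩ ⟨(v, c1), hs2⟩ := ⟨adjuv, ne01⟩
      rintro ⟨a, ha⟩ ⟨b, hb⟩
      have ha' := ha
      have hb' := hb
      simp only [Set.mem_insert_iff, Set.mem_singleton_iff] at ha' hb'
      rcases ha' with rfl | rfl <;> rcases hb' with rfl | rfl
      · exact Reachable.refl _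
      · exact r12.reachable
      · exact r12.symm.reachable
      · exact Reachable.refl _
    · exact ⟨⟨(u, c0), hs1⟩⟩

lemma triple_cpds {γ : Type*} [Fintype γ] {k : ℕ} {m : Fin k → ℕ}
    (G : SimpleGraph γ) (hcard : 3 ≤ Fintype.card γ)
    {u v : γ} (huv : u ≠ v) (hu : _root_.IsUniversal G u) (hv : _root_.IsUniversal G v)
    (h0k : 0 < k) (h1k : 1 < k) (h2k : 2 < k) (hpos : ∀ i, 1 ≤ m i) :
    ∃ S : Finset (γ × Σ i, Fin (m i)), S.card = 3 ∧
      IsCPDS (tensorProd G (completeMultipartiteGraph fun i => Fin (m i))) ↑S := by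
  classical
  obtain ⟨w0, hw0u, hw0v⟩ := exists_third hcard u v
  have adjuv : G.Adj u v := hu v huv.symm
  have adjvu : G.Adj v u := hv u huv
  have adjw0u : G.Adj w0 u := (hu w0 hw0u).symm
  have adjw0v : G.Adj w0 v := (hv w0 hw0v).symm
  set c0 : Σ i, Fin (m i) := ⟨⟨0, h0k⟩, ⟨0, hpos _⟩⟩ with hc0
  set c1 : Σ i, Fin (m i) := ⟨⟨1, h1k⟩, ⟨0, hpos _⟩⟩ with hc1
  set c2 : Σ i, Fin (m i) := ⟨⟨2, h2k⟩, ⟨0, hpos _⟩⟩ with hc2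
  have ne01 : (⟨0, h0k⟩ : Fin k) ≠ ⟨1, h1k⟩ := Fin.ne_of_val_ne (by simp)
  have ne10 : (⟨1, h1k⟩ : Fin k) ≠ ⟨0, h0k⟩ := Fin.ne_of_val_ne (by simp)
  have ne12 : (⟨1, h1k⟩ : Fin k) ≠ ⟨2, h2k⟩ := Fin.ne_of_val_ne (by simp)
  have ne20 : (⟨2, h2k⟩ : Fin k) ≠ ⟨0, h0k⟩ := Fin.ne_of_val_ne (by simp)
  have ne21 : (⟨2, h2k⟩ : Fin k) ≠ ⟨1, h1k⟩ := Fin.ne_of_val_ne (by simp)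
  have hne12 : (u, c0) ≠ (v, c1) := fun e => huv (congrArg Prod.fst e)
  have hne13 : (u, c0) ≠ (w0, c2) := fun e => hw0u (congrArg Prod.fst e).symm
  have hne23 : (v, c1) ≠ (w0, c2) := fun e => hw0v (congrArg Prod.fst e).symm
  refine ⟨{(u, c0), (v, c1), (w0, c2)}, ?_, ?_⟩
  · rw [Finset.card_insert_of_notMem (by simp [hne12, hne13]), Finset.card_pair hne23]
  rw [IsCPDS, Finset.coe_insert, Finset.coe_insert, Finset.coe_singleton]
  have hs1 : (u, c0) ∈ ({(u, c0), (v, c1), (w0, c2)} : Set (γ × Σ i, Fin (m i))) :=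
    Or.inl rfl
  have hs2 : (v, c1) ∈ ({(u, c0), (v, c1), (w0, c2)} : Set (γ × Σ i, Fin (m i))) :=
    Or.inr (Or.inl rfl)
  have hs3 : (w0, c2) ∈ ({(u, c0), (v, c1), (w0, c2)} : Set (γ × Σ i, Fin (m i))) :=
    Or.inr (Or.inr rfl)
  constructor
  · rintro ⟨x, y⟩
    by_cases hxu : x = u
    · subst hxu
      by_cases h1 : y.1 = ⟨1, h1k⟩
      · exact Monitored.dom hs3 ⟨adjw0u, fun e => ne21 (e.trans h1)⟩
      · exact Monitored.dom hs2 ⟨adjvu, fun e => h1 e.symm⟩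
    · by_cases hxv : x = v
      · subst hxv
        by_cases h0 : y.1 = ⟨0, h0k⟩
        · exact Monitored.dom hs3 ⟨adjw0v, fun e => ne20 (e.trans h0)⟩
        · exact Monitored.dom hs1 ⟨adjuv, fun e => h0 e.symm⟩
      · by_cases h0 : y.1 = ⟨0, h0k⟩
        · exact Monitored.dom hs2 ⟨hv x hxv, fun e => ne10 (e.trans h0)⟩
        · exact Monitored.dom hs1 ⟨hu x hxu, fun e => h0 e.symm⟩
  · rw [SimpleGraph.connected_iff]
    constructor
    · have r12 : ((tensorProd G (completeMultipartiteGraph fun i => Fin (m i))).induce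
          {(u, c0), (v, c1), (w0, c2)}).Adj ⟨(u, c0), hs1⟩ ⟨(v, c1), hs2⟩ := ⟨adjuv, ne01⟩
      have r32 : ((tensorProd G (completeMultipartiteGraph fun i => Fin (m i))).induce
          {(u, c0), (v, c1), (w0, c2)}).Adj ⟨(w0, c2), hs3⟩ ⟨(v, c1), hs2⟩ := ⟨adjw0v, ne21⟩
      have hub : ∀ a : ({(u, c0), (v, c1), (w0, c2)} : Set (γ × Σ i, Fin (m i))),
          ((tensorProd G (completeMultipartiteGraph fun i => Fin (m i))).induce
            {(u, c0), (v, c1), (w0, c2)}).Reachable a ⟨(v, c1), hs2⟩ := by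
        rintro ⟨a, ha⟩
        have ha' := ha
        simp only [Set.mem_insert_iff, Set.mem_singleton_iff] at ha'
        rcases ha' with rfl | rfl | rfl
        · exact r12.reachable
        · exact Reachable.refl _
        · exact r32.reachable
      intro a b
      exact (hub a).trans (hub b).symm
    · exact ⟨⟨(v, c1), hs2⟩⟩

end CPDNAux

/-- `γ_{P,c}(G × K_{m₁,…,m_k})` for `G` with at least two universal vertices. -/
theorem stmt_18 {α : Type*} [Fintype α]
    (G : SimpleGraph α) (hG : G.Connected)
    (hGcard : 3 ≤ Fintype.card α)
    (hGuniv : ∃ u v, u ≠ v ∧ _root_.IsUniversal G u ∧ _root_.IsUniversal G v)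
    (k : ℕ) (hk : 3 ≤ k) (m : Fin k → ℕ) (hmono : Monotone m) (hpos : ∀ i, 1 ≤ m i) :
    (m ⟨0, by omega⟩ = 1 ∧ m ⟨1, by omega⟩ = 1 →
      cpdn (tensorProd G (completeMultipartiteGraph (fun i => Fin (m i)))) = 2) ∧
    (¬ (m ⟨0, by omega⟩ = 1 ∧ m ⟨1, by omega⟩ = 1) →
      cpdn (tensorProd G (completeMultipartiteGraph (fun i => Fin (m i)))) = 3) := by
  classical
  obtain ⟨u, v, huv, hu, hv⟩ := hGuniv
  have h0k : (0:ℕ) < k := by omega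
  have h1k : (1:ℕ) < k := by omega
  have h2k : (2:ℕ) < k := by omega
  have hno0 : ∀ S : Finset (α × Σ i, Fin (m i)), S.card = 0 →
      ¬ IsCPDS (tensorProd G (completeMultipartiteGraph fun i => Fin (m i))) ↑S := by
    rintro S hS ⟨hPDS, hconn⟩
    rw [Finset.card_eq_zero] at hS
    subst hS
    obtain ⟨⟨z, hz⟩⟩ := hconn.nonempty
    simp at hz
  have hno1 : ∀ S : Finset (α × Σ i, Fin (m i)), S.card = 1 →
      ¬ IsCPDS (tensorProd G (completeMultipartiteGraph fun i => Fin (m i))) ↑S := by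
    rintro S hS ⟨hPDS, -⟩
    obtain ⟨s, rfl⟩ := Finset.card_eq_one.mp hS
    rw [Finset.coe_singleton] at hPDS
    exact no_singleton_pds G hGcard huv hu hv hk hpos s.1 s.2 hPDS
  constructor
  · rintro ⟨hm0, hm1⟩
    have hmem := pair_cpds G huv hu hv h0k h1k h2k hpos hm0 hm1
    refine natSInf_eq hmem ?_
    rintro n hn ⟨S, hc, hS⟩
    have : n = 0 ∨ n = 1 := by omega
    rcases this with rfl | rfl
    · exact hno0 S hc hS
    · exact hno1 S hc hS
  · intro hnot
    have hnot' : ¬ (m ⟨0, h0k⟩ = 1 ∧ m ⟨1, h1k⟩ = 1) := hnot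
    have hmem := triple_cpds G hGcard huv hu hv h0k h1k h2k hpos
    refine natSInf_eq hmem ?_
    rintro n hn ⟨S, hc, hS⟩
    have hn' : n = 0 ∨ n = 1 ∨ n = 2 := by omega
    rcases hn' with rfl | rfl | rfl
    · exact hno0 S hc hS
    · exact hno1 S hc hS
    · -- no connected power dominating set of size 2
      obtain ⟨hPDS, hconn⟩ := hS
      obtain ⟨s1, s2, hss, rfl⟩ := Finset.card_eq_two.mp hc
      rw [Finset.coe_insert, Finset.coe_singleton] at hPDS hconn
      have hadj := adj_of_connected_pair _ hss hconn
      rw [tensor_multi_adj] at hadj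
      obtain ⟨hadjG, hadjH⟩ := hadj
      have hp0 := hpos ⟨0, h0k⟩
      have hp1 := hpos ⟨1, h1k⟩
      have e01 : m ⟨0, h0k⟩ ≤ m ⟨1, h1k⟩ := hmono (by rw [Fin.mk_le_mk]; omega)
      have hm1' : 2 ≤ m ⟨1, h1k⟩ := by
        rcases Nat.lt_or_ge (m ⟨1, h1k⟩) 2 with hl | hg
        · exact absurd ⟨by omega, by omega⟩ hnot'
        · exact hg
      have main : ∀ t1 t2 : α × Σ i, Fin (m i), G.Adj t1.1 t2.1 → t1.2.1 ≠ t2.2.1 →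
          2 ≤ m t2.2.1 →
          ¬ IsPDS (tensorProd G (completeMultipartiteGraph fun i => Fin (m i))) {t1, t2} := by
        rintro ⟨x1, y1⟩ ⟨x2, y2⟩ hG12 hH12 hm2 hP
        have hm2' : 2 ≤ m y2.1 := hm2
        set j0 : Fin (m y2.1) := ⟨0, by omega⟩ with hj0
        set j1 : Fin (m y2.1) := ⟨1, by omega⟩ with hj1
        have hj : j0 ≠ j1 := Fin.ne_of_val_ne (by simp)
        have hpq : ((x1, ⟨y2.1, j0⟩) : α × Σ i, Fin (m i)) ≠ (x1, ⟨y2.1, j1⟩) := by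
          intro e
          have e2 := congrArg Prod.snd e
          exact hj (eq_of_heq (Sigma.mk.inj_iff.mp e2).2)
        refine (twins_not_monitored
          (tensorProd G (completeMultipartiteGraph fun i => Fin (m i)))
          {(x1, y1), (x2, y2)} hpq (fun r => Iff.rfl) ?_ ?_ ?_ ?_ _ (hP _)).1 rfl
        · rintro (e | e)
          · exact hH12 (congrArg (fun r => r.2.1) e).symm
          · have e2 := congrArg Prod.fst e
            exact hG12.ne e2
        · rintro (e | e)
          · exact hH12 (congrArg (fun r => r.2.1) e).symm
          · have e2 := congrArg Prod.fst e
            exact hG12.ne e2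
        · rintro s (rfl | rfl) hadj'
          · exact G.loopless.irrefl x1 hadj'.1
          · exact hadj'.2 rfl
        · rintro s (rfl | rfl) hadj'
          · exact G.loopless.irrefl x1 hadj'.1
          · exact hadj'.2 rfl
      by_cases hcase : 1 ≤ s2.2.1.val
      · have h2m : 2 ≤ m s2.2.1 :=
          le_trans hm1' (hmono (Fin.le_def.mpr hcase))
        exact main s1 s2 hadjG hadjH h2m hPDS
      · have h1v : 1 ≤ s1.2.1.val := by
          have hne : s1.2.1.val ≠ s2.2.1.val := fun e => hadjH (Fin.ext e)
          omega
        have h2m : 2 ≤ m s1.2.1 :=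
          le_trans hm1' (hmono (Fin.le_def.mpr h1v))
        have hPDS2 : IsPDS (tensorProd G (completeMultipartiteGraph fun i => Fin (m i)))
            {s2, s1} := by
          rw [Set.pair_comm]; exact hPDS
        exact main s2 s1 hadjG.symm (Ne.symm hadjH) h2m hPDS2
end
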